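/- arXiv:2106.10368 — 5 statements merged into one kernel-verified Lean document; each statement's English description precedes it below -/
import Mathlib

section
/- Let G be a simple 3-regular graph that has a Hamiltonian cycle. Then the line graph L(G) decomposes into two Hamiltonian cycles, i.e., the edge set of L(G) is the disjoint union of the edge sets of two Hamiltonian cycles of L(G). -/
open SimpleGraph List

private def kzS {X : Type*} (a b : X) : Sym2 X := s(a, b)

@[simp] private lemma kzS_def {X : Type*} (a b : X) : kzS a b = s(a, b) := rfl

private lemma kzWalk {W : Type*} (H : SimpleGraph W) :
    ∀ (l : List W) (x y : W), List.Chain' H.Adj (x :: l ++ [y]) →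
      ∃ p : H.Walk x y, p.support = x :: l ++ [y] ∧
        p.edges = List.zipWith kzS (x :: l) (l ++ [y]) := by
  intro l
  induction l with
  | nil =>
    intro x y h
    have h' : List.Chain' H.Adj [x, y] := h
    exact ⟨SimpleGraph.Walk.cons (List.isChain_cons_cons.mp h').1 SimpleGraph.Walk.nil,
      by simp, by simp⟩
  | cons z t ih =>
    intro x y h
    have h' : List.Chain' H.Adj (x :: (z :: (t ++ [y]))) := h
    replace h' := List.isChain_cons_cons.mp h'
    obtain ⟨p, hs, he⟩ := ih z y h'.2
    exact ⟨SimpleGraph.Walk.cons h'.1 p, by simp [hs], by simp [he]⟩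

private def kzSeg {X : Type*} (blk : ℕ → List X) : ℕ → ℕ → List X
  | _, 0 => []
  | i, (k+1) => blk i ++ kzSeg blk (i+1) k

private lemma kzSeg_mem {X : Type*} (blk : ℕ → List X) :
    ∀ (k i : ℕ) (x : X), x ∈ kzSeg blk i k ↔ ∃ j, j < k ∧ x ∈ blk (i + j) := by
  intro k
  induction k with
  | zero => simp [kzSeg]
  | succ k ih =>
    intro i x
    simp only [kzSeg, List.mem_append, ih (i+1) x]
    constructor
    · rintro (h | ⟨j, hj, hx⟩)
      · exact ⟨0, by omega, by simpa using h⟩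
      · exact ⟨j + 1, by omega, by rwa [show i + (j+1) = i + 1 + j by omega]⟩
    · rintro ⟨j, hj, hx⟩
      rcases Nat.eq_zero_or_pos j with rfl | hj0
      · exact Or.inl (by simpa using hx)
      · exact Or.inr ⟨j - 1, by omega, by rwa [show i + 1 + (j-1) = i + j by omega]⟩

private lemma kzSeg_ne_nil {X : Type*} (blk : ℕ → List X) (h0 : ∀ j, blk j ≠ [])
    (k i : ℕ) (hk : k ≠ 0) : kzSeg blk i k ≠ [] := by
  cases k with
  | zero => omega
  | succ k => simp only [kzSeg]; intro h; exact h0 i (List.append_eq_nil_iff.mp h).1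

private lemma kzSeg_head? {X : Type*} (blk : ℕ → List X) (h0 : ∀ j, blk j ≠ [])
    (k i : ℕ) (hk : k ≠ 0) : (kzSeg blk i k).head? = (blk i).head? := by
  cases k with
  | zero => omega
  | succ k => simp only [kzSeg]; exact List.head?_append_of_ne_nil _ (h0 i)

private lemma kzSeg_getLast? {X : Type*} (blk : ℕ → List X) (h0 : ∀ j, blk j ≠ []) :
    ∀ (k i : ℕ), (kzSeg blk i (k+1)).getLast? = (blk (i + k)).getLast? := by
  intro k
  induction k with
  | zero => intro i; simp [kzSeg]
  | succ k ih =>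
    intro i
    show (blk i ++ kzSeg blk (i+1) (k+1)).getLast? = _
    rw [List.getLast?_append_of_ne_nil _ (kzSeg_ne_nil blk h0 (k+1) (i+1) (by omega)),
      ih (i+1), show i + 1 + k = i + (k+1) by omega]

private lemma kzSeg_nodup {X : Type*} (blk : ℕ → List X) :
    ∀ (k i : ℕ), (∀ j, j < k → (blk (i + j)).Nodup) →
      (∀ j j' x, j < j' → j' < k → x ∈ blk (i + j) → x ∈ blk (i + j') → False) →
      (kzSeg blk i k).Nodup := by
  intro k
  induction k with
  | zero => intro i _ _; simp [kzSeg]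
  | succ k ih =>
    intro i h1 h2
    simp only [kzSeg]
    rw [List.nodup_append]
    refine ⟨by simpa using h1 0 (by omega), ?_, ?_⟩
    · refine ih (i+1) (fun j hj => ?_) (fun j j' x hjj' hj' hx hx' => ?_)
      · rw [show i + 1 + j = i + (j+1) by omega]; exact h1 (j+1) (by omega)
      · rw [show i + 1 + j = i + (j+1) by omega] at hx
        rw [show i + 1 + j' = i + (j'+1) by omega] at hx'
        exact h2 (j+1) (j'+1) x (by omega) (by omega) hx hx'
    · intro x hx y hx' hxy; subst hxy
      rw [kzSeg_mem] at hx'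
      obtain ⟨j, hj, hxj⟩ := hx'
      rw [show i + 1 + j = i + (j+1) by omega] at hxj
      exact h2 0 (j+1) x (by omega) (by omega) (by simpa using hx) hxj

private lemma kzSeg_chain' {X : Type*} {R : X → X → Prop} (blk : ℕ → List X)
    (h0 : ∀ j, blk j ≠ []) (h1 : ∀ j, List.Chain' R (blk j))
    (h2 : ∀ j x y, x ∈ (blk j).getLast? → y ∈ (blk (j+1)).head? → R x y) :
    ∀ (k i : ℕ), List.Chain' R (kzSeg blk i k) := by
  intro k
  induction k with
  | zero => intro i; simp [kzSeg]; exact List.isChain_nil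
  | succ k ih =>
    intro i
    simp only [kzSeg]
    refine List.IsChain.append (h1 i) (ih (i+1)) (fun x hx y hy => ?_)
    rcases Nat.eq_zero_or_pos k with rfl | hk
    · simp [kzSeg] at hy
    · rw [kzSeg_head? blk h0 k (i+1) (by omega)] at hy
      exact h2 i x y hx hy

private lemma kzZip_append {X : Type*} :
    ∀ (a' : List X) (b : List X) (c z : X),
      List.zipWith kzS (c :: (a' ++ b)) ((a' ++ b) ++ [z]) =
        List.zipWith kzS (c :: a') (a' ++ [(b ++ [z]).headD c]) ++
          List.zipWith kzS b (b.tail ++ [z]) := by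
  intro a'
  induction a' with
  | nil =>
    intro b c z
    cases b with
    | nil => simp
    | cons d b' => simp
  | cons d a'' ih =>
    intro b c z
    simp only [List.cons_append, List.zipWith_cons_cons]
    rw [show (b ++ [z]).headD c = (b ++ [z]).headD d by cases b <;> simp]
    exact congrArg _ (ih b d z)

private lemma kzSeg_zip {X : Type*} (blk : ℕ → List X) (h0 : ∀ j, blk j ≠ [])
    (nxt : ℕ → X) (hnxt : ∀ j, (blk j).head? = some (nxt j)) :
    ∀ (k i : ℕ),
      List.zipWith kzS (kzSeg blk i k) ((kzSeg blk i k).tail ++ [nxt (i + k)]) =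
        kzSeg (fun j => List.zipWith kzS (blk j) ((blk j).tail ++ [nxt (j + 1)])) i k := by
  intro k
  induction k with
  | zero => intro i; simp [kzSeg]
  | succ k ih =>
    intro i
    have hbi := h0 i
    obtain ⟨c, a', hca⟩ : ∃ c a', blk i = c :: a' := by
      cases h : blk i with
      | nil => exact absurd h hbi
      | cons c a' => exact ⟨c, a', rfl⟩
    set S := kzSeg blk (i+1) k with hS
    have hseg : kzSeg blk i (k+1) = blk i ++ S := rfl
    rw [hseg, hca]
    have h2 : ((c :: a') ++ S).tail ++ [nxt (i + (k+1))] = (a' ++ S) ++ [nxt (i + (k+1))] := by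
      simp
    have h3 : (c :: a') ++ S = c :: (a' ++ S) := by simp
    rw [h2, h3, kzZip_append a' S c (nxt (i + (k+1)))]
    have hhead : (S ++ [nxt (i + (k+1))]).headD c = nxt (i + 1) := by
      rcases Nat.eq_zero_or_pos k with rfl | hk
      · simp [hS, kzSeg]
      · have h1 : S.head? = some (nxt (i+1)) := by
          rw [hS, kzSeg_head? blk h0 k (i+1) (by omega)]; exact hnxt (i+1)
        rw [List.headD_eq_head?_getD, List.head?_append_of_ne_nil _
          (kzSeg_ne_nil blk h0 k (i+1) (by omega)), h1]
        rfl
    rw [hhead]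
    have harith : i + (k + 1) = (i + 1) + k := by omega
    rw [harith, ih (i+1)]
    have hfin : kzSeg (fun j => List.zipWith kzS (blk j) ((blk j).tail ++ [nxt (j + 1)])) i (k+1) =
        List.zipWith kzS (blk i) ((blk i).tail ++ [nxt (i + 1)]) ++
          kzSeg (fun j => List.zipWith kzS (blk j) ((blk j).tail ++ [nxt (j + 1)])) (i+1) k := rfl
    rw [hfin, hca]
    simp
section Build
variable {n : ℕ} {X : Type*} [DecidableEq X] {H : SimpleGraph X}
  {E M : ZMod n → X} {σ : ZMod n → ZMod n} {Q : ZMod n → Prop}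

private lemma kzBuild [DecidablePred Q] (hn : 4 ≤ n)
    (hσ1 : ∀ a, σ a ≠ a + 1)
    (hEE : ∀ a b, E a = E b → a = b) (hME : ∀ a b, M a ≠ E b)
    (hMM : ∀ a b, M a = M b ↔ b = a ∨ b = σ a)
    (aME : ∀ a, H.Adj (M a) (E a)) (aEM : ∀ a, H.Adj (E a) (M (a + 1)))
    (aEE : ∀ a, H.Adj (E a) (E (a + 1)))
    (hcover : ∀ x : X, ∃ a, x = E a ∨ x = M a)
    (hQ : ∀ a, Q a ↔ ¬ Q (σ a)) :
    ∃ (b : X) (p : H.Walk b b), p.IsHamiltonianCycle ∧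
      ∀ z, z ∈ p.edges ↔ ∃ a, (Q a ∧ z = s(M a, E a)) ∨
        (Q (a + 1) ∧ z = s(E a, M (a + 1))) ∨ (¬ Q (a + 1) ∧ z = s(E a, E (a + 1))) := by
  haveI : NeZero n := ⟨by omega⟩
  have h20 : (2 : ZMod n) ≠ 0 := by
    intro h
    have h2 : ((2 : ℕ) : ZMod n) = 0 := by push_cast; exact h
    rw [ZMod.natCast_eq_zero_iff] at h2
    exact absurd (Nat.le_of_dvd (by norm_num) h2) (by omega)
  have h10 : (1 : ZMod n) ≠ 0 := by
    intro h
    have h2 : ((1 : ℕ) : ZMod n) = 0 := by push_cast; exact h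
    rw [ZMod.natCast_eq_zero_iff] at h2
    exact absurd (Nat.le_of_dvd (by norm_num) h2) (by omega)
  have hcast1 : ∀ j : ℕ, ((j + 1 : ℕ) : ZMod n) = (j : ZMod n) + 1 := by
    intro j; push_cast; ring
  have hcast_inj : ∀ j j' : ℕ, j < j' → j' < n → ((j : ZMod n) ≠ ((j' : ℕ) : ZMod n)) := by
    intro j j' h1 h2 h
    have e1 := ZMod.val_cast_of_lt (n := n) (show j < n by omega)
    have e2 := ZMod.val_cast_of_lt (n := n) h2
    rw [h, e2] at e1; omega
  have hsurj : ∀ a : ZMod n, ∃ j, j < n ∧ ((j : ℕ) : ZMod n) = a := fun a =>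
    ⟨a.val, a.val_lt, ZMod.natCast_rightInverse a⟩
  have hQ' : ∀ a, ¬ Q a → Q (σ a) := fun a h => by
    by_contra h2; exact h ((hQ a).mpr h2)
  have cMa1 : ∀ a, M a ≠ M (a + 1) := by
    intro a h
    rcases (hMM a (a + 1)).mp h with h' | h'
    · exact h10 (by linear_combination h')
    · exact hσ1 a h'.symm
  -- blocks
  set B : ZMod n → List X := fun a => if Q a then [M a, E a] else [E a] with hB
  set nx : ZMod n → X := fun a => if Q a then M a else E a with hnx
  set blk : ℕ → List X := fun j => B ((j : ZMod n)) with hblk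
  set nxt : ℕ → X := fun j => nx ((j : ZMod n)) with hnxtdef
  have h0 : ∀ j, blk j ≠ [] := by
    intro j; simp only [hblk, hB]; split <;> simp
  have hnxt : ∀ j, (blk j).head? = some (nxt j) := by
    intro j; simp only [hblk, hB, hnxtdef, hnx]; split <;> simp
  have hBmem : ∀ (a : ZMod n) (z : X), z ∈ B a ↔ z = E a ∨ (Q a ∧ z = M a) := by
    intro a z; simp only [hB]; split <;> simp <;> tauto
  have hBlast : ∀ a : ZMod n, (B a).getLast? = some (E a) := by
    intro a; simp only [hB]; split <;> simp
  -- the support list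
  set L := kzSeg blk 0 n with hL
  have hLne : L ≠ [] := kzSeg_ne_nil blk h0 n 0 (by omega)
  have hLhead : L.head? = some (nx 0) := by
    rw [hL, kzSeg_head? blk h0 n 0 (by omega), hnxt 0]
    simp [hnxtdef]
  obtain ⟨x, l, hxl⟩ : ∃ x l', L = x :: l' := by
    cases hc : L with
    | nil => exact absurd hc hLne
    | cons x l' => exact ⟨x, l', rfl⟩
  have hx : x = nx 0 := by rw [hxl] at hLhead; simpa using hLhead
  have hcastn1 : ((n - 1 : ℕ) : ZMod n) = -1 := by
    have h1 : (((n - 1) + 1 : ℕ) : ZMod n) = 0 := by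
      rw [show (n - 1) + 1 = n by omega]; exact ZMod.natCast_self n
    rw [hcast1 (n - 1)] at h1
    exact eq_neg_of_add_eq_zero_left h1
  have hlast : L.getLast? = some (E (-1)) := by
    have h1 : L = kzSeg blk 0 ((n - 1) + 1) := by rw [hL]; congr 1; omega
    rw [h1, kzSeg_getLast? blk h0 (n - 1) 0, hblk]
    simp only []
    rw [show (0 + (n - 1) : ℕ) = n - 1 by omega, hcastn1, hBlast]
  have chainL : List.Chain' H.Adj L := by
    rw [hL]
    refine kzSeg_chain' blk h0 ?_ ?_ n 0
    · intro j
      simp only [hblk, hB]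
      split
      · exact List.isChain_cons_cons.mpr ⟨aME _, List.isChain_singleton _⟩
      · exact List.isChain_singleton _
    · intro j a b ha hb
      rw [hblk] at ha
      simp only [hBlast, Option.mem_def, Option.some_inj] at ha
      rw [hnxt (j + 1)] at hb
      simp only [Option.mem_def, Option.some_inj] at hb
      subst ha; subst hb
      simp only [hnxtdef, hnx, hcast1 j]
      split
      · exact aEM _
      · exact aEE _
  have hclose : H.Adj (E (-1)) (nx 0) := by
    simp only [hnx]
    split
    · have h := aEM (-1); rwa [neg_add_cancel] at h
    · have h := aEE (-1); rwa [neg_add_cancel] at h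
  have chainFull : List.Chain' H.Adj (x :: l ++ [x]) := by
    have he : x :: l ++ [x] = L ++ [x] := by rw [hxl]
    rw [he]
    refine chainL.append (List.isChain_singleton x) ?_
    intro a ha b hb
    simp only [List.head?_cons, Option.mem_def, Option.some_inj] at hb
    rw [hlast] at ha
    simp only [Option.mem_def, Option.some_inj] at ha
    subst ha; subst hb; rw [hx]; exact hclose
  obtain ⟨p, hps, hpe⟩ := kzWalk H l x x chainFull
  -- edges
  have hxn : x = nxt (0 + n) := by
    rw [hx, hnxtdef]
    simp [ZMod.natCast_self]
  have hpe2 : p.edges =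
      kzSeg (fun j => List.zipWith kzS (blk j) ((blk j).tail ++ [nxt (j + 1)])) 0 n := by
    rw [hpe, ← kzSeg_zip blk h0 nxt hnxt n 0, ← hL, hxl, List.tail_cons]
    rw [hxn]
  set EB : ZMod n → List (Sym2 X) :=
    fun a => if Q a then [s(M a, E a), s(E a, nx (a + 1))] else [s(E a, nx (a + 1))] with hEB
  have heblk : (fun j => List.zipWith kzS (blk j) ((blk j).tail ++ [nxt (j + 1)])) =
      fun j : ℕ => EB ((j : ZMod n)) := by
    funext j
    simp only [hblk, hB, hEB, hnxtdef, hnx, hcast1 j]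
    split <;> simp
  rw [heblk] at hpe2
  have hmemE : ∀ z, z ∈ p.edges ↔ ∃ a : ZMod n, z ∈ EB a := by
    intro z
    rw [hpe2, kzSeg_mem]
    constructor
    · rintro ⟨j, hj, hz⟩; exact ⟨_, hz⟩
    · rintro ⟨a, hz⟩
      obtain ⟨j, hj, rfl⟩ := hsurj a
      exact ⟨j, hj, by simpa using hz⟩
  have hEBmem : ∀ (a : ZMod n) (z : Sym2 X),
      z ∈ EB a ↔ (Q a ∧ z = s(M a, E a)) ∨ z = s(E a, nx (a + 1)) := by
    intro a z; simp only [hEB]; split <;> simp <;> tauto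
  -- distinctness of edges
  have dMEa : ∀ a b : ZMod n, s(M a, E a) ≠ s(E b, nx (b + 1)) := by
    intro a b h
    rw [Sym2.eq_iff] at h
    rcases h with ⟨h1, h2⟩ | ⟨h1, h2⟩
    · exact hME a b h1
    · have hab := hEE a b h2
      subst hab
      simp only [hnx] at h1
      split at h1
      · exact cMa1 a h1
      · exact hME a _ h1
  have dEEn : ∀ a b : ZMod n, a ≠ b → s(E a, nx (a + 1)) ≠ s(E b, nx (b + 1)) := by
    intro a b hab h
    rw [Sym2.eq_iff] at h
    rcases h with ⟨h1, h2⟩ | ⟨h1, h2⟩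
    · exact hab (hEE a b h1)
    · have hb1 : a = b + 1 := by
        simp only [hnx] at h1
        split at h1
        · exact absurd h1.symm (hME _ _)
        · exact hEE a (b + 1) h1
      have ha1 : b = a + 1 := by
        simp only [hnx] at h2
        split at h2
        · exact absurd h2 (hME _ _)
        · exact (hEE _ _ h2).symm
      rw [ha1] at hb1
      exact h20 (by linear_combination -hb1)
  have dMM : ∀ a b : ZMod n, Q a → Q b → M a = M b → a = b := by
    intro a b ha hb h
    rcases (hMM a b).mp h with rfl | rfl
    · rfl
    · exact absurd hb ((hQ a).mp ha)
  have dMEMb : ∀ a b : ZMod n, s(M a, E a) = s(M b, E b) → a = b := by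
    intro a b h
    rw [Sym2.eq_iff] at h
    rcases h with ⟨h1, h2⟩ | ⟨h1, h2⟩
    · exact hEE a b h2
    · exact absurd h1 (hME a b)
  have hnodupE : p.edges.Nodup := by
    rw [hpe2]
    refine kzSeg_nodup _ n 0 ?_ ?_
    · intro j hj
      simp only [hEB]
      split
      · refine List.nodup_cons.mpr ⟨?_, List.nodup_singleton _⟩
        intro hmem
        simp only [List.mem_singleton] at hmem
        exact dMEa _ _ hmem
      · exact List.nodup_singleton _
    · intro j j' z hjj' hj' hz hz'
      have hne : (((0 + j : ℕ)) : ZMod n) ≠ (((0 + j' : ℕ)) : ZMod n) :=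
        hcast_inj _ _ (by omega) (by omega)
      rw [hEBmem] at hz hz'
      rcases hz with ⟨hQa, hza⟩ | hza <;> rcases hz' with ⟨hQb, hzb⟩ | hzb
      · exact hne (dMEMb _ _ (hza.symm.trans hzb))
      · exact dMEa _ _ (hza.symm.trans hzb)
      · exact dMEa _ _ (hzb.symm.trans hza)
      · exact dEEn _ _ hne (hza.symm.trans hzb)
  have hnodupL : L.Nodup := by
    rw [hL]
    refine kzSeg_nodup blk n 0 ?_ ?_
    · intro j hj
      simp only [hblk, hB]
      split
      · refine List.nodup_cons.mpr ⟨?_, List.nodup_singleton _⟩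
        simp only [List.mem_singleton]
        exact hME _ _
      · simp
    · intro j j' z hjj' hj' hz hz'
      have hne : (((0 + j : ℕ)) : ZMod n) ≠ (((0 + j' : ℕ)) : ZMod n) :=
        hcast_inj _ _ (by omega) (by omega)
      simp only [hblk] at hz hz'
      rw [hBmem] at hz hz'
      rcases hz with hza | ⟨hQa, hza⟩ <;> rcases hz' with hzb | ⟨hQb, hzb⟩
      · exact hne (hEE _ _ (hza.symm.trans hzb))
      · exact hME _ _ ((hza.symm.trans hzb).symm)
      · exact hME _ _ ((hzb.symm.trans hza).symm)
      · exact hne (dMM _ _ hQa hQb (hza.symm.trans hzb))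
  have hallL : ∀ f : X, f ∈ L := by
    intro f
    rw [hL, kzSeg_mem]
    have key : ∃ a : ZMod n, f ∈ B a := by
      obtain ⟨a, rfl | rfl⟩ := hcover f
      · exact ⟨a, (hBmem a _).mpr (Or.inl rfl)⟩
      · by_cases hqa : Q a
        · exact ⟨a, (hBmem a _).mpr (Or.inr ⟨hqa, rfl⟩)⟩
        · exact ⟨σ a, (hBmem (σ a) _).mpr (Or.inr ⟨hQ' a hqa,
            (hMM a (σ a)).mpr (Or.inr rfl)⟩)⟩
    obtain ⟨a, ha⟩ := key
    obtain ⟨j, hj, rfl⟩ := hsurj a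
    exact ⟨j, hj, by simpa [hblk] using ha⟩
  have hsupTail : p.support.tail = l ++ [x] := by rw [hps]; rfl
  have hperm : (l ++ [x]).Perm L := by
    rw [hxl]; exact List.perm_append_singleton x l
  have hcycle : p.IsCycle := by
    refine ⟨⟨⟨hnodupE⟩, ?_⟩, ?_⟩
    · intro h
      rw [h] at hps
      simp only [SimpleGraph.Walk.support_nil] at hps
      have : ([] : List X) = l ++ [x] := by
        simpa using hps
      exact absurd this.symm (by simp)
    · rw [hsupTail]
      exact hperm.nodup_iff.mpr hnodupL
  refine ⟨x, p, ?_, ?_⟩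
  · rw [SimpleGraph.Walk.isHamiltonianCycle_iff_isCycle_and_support_count_tail_eq_one]
    refine ⟨hcycle, fun f => ?_⟩
    rw [hsupTail, hperm.count_eq]
    exact List.count_eq_one_of_mem hnodupL (hallL f)
  · intro z
    rw [hmemE]
    constructor
    · rintro ⟨a, hz⟩
      rw [hEBmem] at hz
      rcases hz with ⟨hqa, rfl⟩ | rfl
      · exact ⟨a, Or.inl ⟨hqa, rfl⟩⟩
      · by_cases hq1 : Q (a + 1)
        · exact ⟨a, Or.inr (Or.inl ⟨hq1, by simp [hnx, hq1]⟩)⟩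
        · exact ⟨a, Or.inr (Or.inr ⟨hq1, by simp [hnx, hq1]⟩)⟩
    · rintro ⟨a, ⟨hqa, rfl⟩ | ⟨hq1, rfl⟩ | ⟨hq1, rfl⟩⟩
      · exact ⟨a, (hEBmem a _).mpr (Or.inl ⟨hqa, rfl⟩)⟩
      · exact ⟨a, (hEBmem a _).mpr (Or.inr (by simp [hnx, hq1]))⟩
      · exact ⟨a, (hEBmem a _).mpr (Or.inr (by simp [hnx, hq1]))⟩
end Build
/-- A simple graph decomposes into two Hamiltonian cycles: its edge set is the
disjoint union of the edge sets of two Hamiltonian cycles. -/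
def SimpleGraph.DecompTwoHamCycles {W : Type*} [DecidableEq W] (H : SimpleGraph W) : Prop :=
  ∃ (a b : W) (p : H.Walk a a) (q : H.Walk b b),
    p.IsHamiltonianCycle ∧ q.IsHamiltonianCycle ∧
    Disjoint {x | x ∈ p.edges} {x | x ∈ q.edges} ∧
    {x | x ∈ p.edges} ∪ {x | x ∈ q.edges} = H.edgeSet

theorem lineGraph_decomp_of_cubic_hamiltonian {V : Type*} [Fintype V] [DecidableEq V]
    (G : SimpleGraph V) [DecidableRel G.Adj]
    (hreg : G.IsRegularOfDegree 3)
    (hham : ∃ (a : V) (c : G.Walk a a), c.IsHamiltonianCycle) :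
    (G.lineGraph).DecompTwoHamCycles := by
  classical
  obtain ⟨a0, c, hc⟩ := hham
  set n := Fintype.card V with hncard
  have hn : 4 ≤ n := by
    have h1 : insert a0 (G.neighborFinset a0) ⊆ Finset.univ := Finset.subset_univ _
    have h2 : (insert a0 (G.neighborFinset a0)).card = 4 := by
      rw [Finset.card_insert_of_notMem (by simp)]
      have := hreg a0
      simp only [SimpleGraph.degree] at this
      omega
    have := Finset.card_le_card h1
    rw [h2, Finset.card_univ] at this
    omega
  haveI : NeZero n := ⟨by omega⟩
  haveI : Fact (1 < n) := ⟨by omega⟩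
  have hvalinj : ∀ a b : ZMod n, a.val = b.val → a = b := fun a b h =>
    ZMod.val_injective n h
  have h20 : (2 : ZMod n) ≠ 0 := by
    intro h
    have h2 : ((2 : ℕ) : ZMod n) = 0 := by push_cast; exact h
    rw [ZMod.natCast_eq_zero_iff] at h2
    exact absurd (Nat.le_of_dvd (by norm_num) h2) (by omega)
  have h10 : (1 : ZMod n) ≠ 0 := by
    intro h
    have h2 : ((1 : ℕ) : ZMod n) = 0 := by push_cast; exact h
    rw [ZMod.natCast_eq_zero_iff] at h2
    exact absurd (Nat.le_of_dvd (by norm_num) h2) (by omega)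
  -- the vertex enumeration
  set t := c.support.tail with ht
  have htlen : t.length = n := by
    have h1 := hc.length_eq
    have h2 := c.length_support
    simp only [ht, List.length_tail, h2, h1]
    omega
  have htnd : t.Nodup := hc.isCycle.support_nodup
  have hvlt : ∀ i : ZMod n, i.val < t.length := by
    rw [htlen]; exact fun i => i.val_lt
  set v : ZMod n → V := fun i => t.get ⟨i.val, hvlt i⟩ with hv
  have hinj : Function.Injective v := by
    intro i j h
    simp only [hv] at h
    have h2 := (List.Nodup.get_inj_iff htnd).mp h
    exact hvalinj i j (by simpa using congrArg Fin.val h2)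
  have hsupp : c.support = a0 :: t := c.support_eq_cons
  have hchain : List.Chain' G.Adj (a0 :: t) := by
    rw [← hsupp]; exact c.isChain_adj_support
  have htne : t ≠ [] := by
    intro h; rw [h] at htlen; simp at htlen; omega
  have hlastt : t.getLast? = some a0 := by
    cases ht' : t with
    | nil => exact absurd ht' htne
    | cons b t' =>
      have h1 : c.support.getLast? = some a0 := by
        rw [List.getLast?_eq_getLast_of_ne_nil (by simp), c.getLast_support]
      rw [hsupp, ht', List.getLast?_cons_cons] at h1
      exact h1
  have hadjv : ∀ i : ZMod n, G.Adj (v i) (v (i + 1)) := by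
    intro i
    have hival : (i + 1).val = (i.val + 1) % n := by
      rw [ZMod.val_add, ZMod.val_one]
    have hchain' := List.isChain_iff_getElem.mp hchain
    by_cases hlt : i.val + 1 < n
    · have h1 : (i + 1).val = i.val + 1 := by rw [hival, Nat.mod_eq_of_lt hlt]
      have h2 := hchain' (i.val + 1) (by simp [htlen]; omega)
      simp only [hv, h1]
      exact h2
    · have hiv : i.val = n - 1 := by have := i.val_lt; omega
      have h1 : (i + 1).val = 0 := by
        rw [hival, hiv, show n - 1 + 1 = n by omega, Nat.mod_self]
      have h3 : v i = a0 := by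
        have h4 : t.getLast? = t[i.val]? := by
          rw [List.getLast?_eq_getElem?, htlen, ← hiv]
        rw [hlastt] at h4
        rw [List.getElem?_eq_getElem (hvlt i)] at h4
        simp only [hv]
        have h5 := Option.some_inj.mp h4
        rw [List.get_eq_getElem]
        exact h5.symm
      have h4 : v (i + 1) = t.get ⟨0, by rw [htlen]; omega⟩ := by
        simp only [hv, h1]
      rw [h3, h4]
      exact hchain' 0 (by simp [htlen]; omega)
  clear hchain hlastt hsupp htne hc
  -- the third neighbor
  have key : ∀ i : ZMod n, ∃ x, G.Adj (v i) x ∧ x ≠ v (i - 1) ∧ x ≠ v (i + 1) ∧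
      ∀ y, G.Adj (v i) y → y = v (i - 1) ∨ y = v (i + 1) ∨ y = x := by
    intro i
    have hadj1 : G.Adj (v i) (v (i - 1)) := by
      have h := hadjv (i - 1); rw [sub_add_cancel] at h; exact h.symm
    have hadj2 : G.Adj (v i) (v (i + 1)) := hadjv i
    have hne12 : v (i - 1) ≠ v (i + 1) := by
      intro h
      have h2 := hinj h
      apply h20
      linear_combination -h2
    have hsub : {v (i - 1), v (i + 1)} ⊆ G.neighborFinset (v i) := by
      intro y hy
      simp only [Finset.mem_insert, Finset.mem_singleton] at hy
      rcases hy with rfl | rfl <;> simp [SimpleGraph.mem_neighborFinset, hadj1, hadj2]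
    have hcard : (G.neighborFinset (v i) \ {v (i - 1), v (i + 1)}).card = 1 := by
      rw [Finset.card_sdiff_of_subset hsub]
      have hd := hreg (v i)
      simp only [SimpleGraph.degree] at hd
      rw [hd, Finset.card_insert_of_notMem (by simp [hne12]), Finset.card_singleton]
    obtain ⟨x, hx⟩ := Finset.card_eq_one.mp hcard
    have hxmem : x ∈ G.neighborFinset (v i) \ {v (i - 1), v (i + 1)} := by
      rw [hx]; exact Finset.mem_singleton_self x
    simp only [Finset.mem_sdiff, SimpleGraph.mem_neighborFinset, Finset.mem_insert,
      Finset.mem_singleton, not_or] at hxmem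
    refine ⟨x, hxmem.1, hxmem.2.1, hxmem.2.2, ?_⟩
    intro y hy
    by_cases h1 : y = v (i - 1)
    · exact Or.inl h1
    by_cases h2 : y = v (i + 1)
    · exact Or.inr (Or.inl h2)
    refine Or.inr (Or.inr ?_)
    have : y ∈ G.neighborFinset (v i) \ {v (i - 1), v (i + 1)} := by
      simp only [Finset.mem_sdiff, SimpleGraph.mem_neighborFinset, Finset.mem_insert,
        Finset.mem_singleton, not_or]
      exact ⟨hy, h1, h2⟩
    rw [hx] at this
    exact Finset.mem_singleton.mp this
  choose w hw1 hw2 hw3 hw4 using key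
  have hvsurj : Function.Surjective v := by
    have hcd : Fintype.card (ZMod n) = Fintype.card V := by rw [ZMod.card n, hncard]
    exact ((Fintype.bijective_iff_injective_and_card v).mpr ⟨hinj, hcd⟩).surjective
  choose σ hσ using fun i => hvsurj (w i)
  have hσ1 : ∀ i, σ i ≠ i + 1 := fun i h => hw3 i (by rw [← hσ i, h])
  have hσ2 : ∀ i, σ i ≠ i - 1 := fun i h => hw2 i (by rw [← hσ i, h])
  have hσi : ∀ i, σ i ≠ i := fun i h => (G.ne_of_adj (hw1 i)) (by rw [← hσ i, h])
  have hσσ : ∀ i, σ (σ i) = i := by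
    intro i
    have hA : G.Adj (v (σ i)) (v i) := by rw [hσ i]; exact (hw1 i).symm
    rcases hw4 (σ i) (v i) hA with h | h | h
    · exact absurd (by linear_combination -(hinj h) : σ i = i + 1) (hσ1 i)
    · exact absurd (by linear_combination -(hinj h) : σ i = i - 1) (hσ2 i)
    · rw [← hσ (σ i)] at h
      exact (hinj h).symm
  -- edges of G as vertices of the line graph
  have hMadj : ∀ i : ZMod n, G.Adj (v i) (v (σ i)) := by
    intro i; rw [hσ i]; exact hw1 i
  set Ee : ZMod n → G.edgeSet := fun i => ⟨s(v i, v (i + 1)), (G.mem_edgeSet).mpr (hadjv i)⟩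
    with hEe
  set Mm : ZMod n → G.edgeSet := fun i => ⟨s(v i, v (σ i)), (G.mem_edgeSet).mpr (hMadj i)⟩
    with hMm
  have hEEc : ∀ a b : ZMod n, Ee a = Ee b → a = b := by
    intro a b h
    have h2 : s(v a, v (a + 1)) = s(v b, v (b + 1)) := congrArg Subtype.val h
    rw [Sym2.eq_iff] at h2
    rcases h2 with ⟨h3, _⟩ | ⟨h3, h4⟩
    · exact hinj h3
    · have h5 := hinj h3
      have h6 := hinj h4
      apply absurd h20
      simp only [ne_eq, not_not]
      linear_combination h6 - h5
  have hMEc : ∀ a b : ZMod n, Mm a ≠ Ee b := by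
    intro a b h
    have h2 : s(v a, v (σ a)) = s(v b, v (b + 1)) := congrArg Subtype.val h
    rw [Sym2.eq_iff] at h2
    rcases h2 with ⟨h3, h4⟩ | ⟨h3, h4⟩
    · have h5 := hinj h3; have h6 := hinj h4
      exact hσ1 a (by rw [h6, h5])
    · have h5 := hinj h3; have h6 := hinj h4
      exact hσ2 a (by rw [h6]; linear_combination -h5)
  have hMMc : ∀ a b : ZMod n, Mm a = Mm b ↔ b = a ∨ b = σ a := by
    intro a b
    constructor
    · intro h
      have h2 : s(v a, v (σ a)) = s(v b, v (σ b)) := congrArg Subtype.val h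
      rw [Sym2.eq_iff] at h2
      rcases h2 with ⟨h3, _⟩ | ⟨_, h4⟩
      · exact Or.inl (hinj h3).symm
      · exact Or.inr (hinj h4).symm
    · rintro (rfl | rfl)
      · rfl
      · apply Subtype.ext
        show s(v a, v (σ a)) = s(v (σ a), v (σ (σ a)))
        rw [hσσ a, Sym2.eq_swap]
  have haME : ∀ a, (G.lineGraph).Adj (Mm a) (Ee a) := by
    intro a
    rw [SimpleGraph.lineGraph_adj_iff_exists]
    exact ⟨hMEc a a, v a, by simp [hMm], by simp [hEe]⟩
  have haEM : ∀ a, (G.lineGraph).Adj (Ee a) (Mm (a + 1)) := by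
    intro a
    rw [SimpleGraph.lineGraph_adj_iff_exists]
    exact ⟨(hMEc (a + 1) a).symm, v (a + 1), by simp [hEe], by simp [hMm]⟩
  have haEE : ∀ a, (G.lineGraph).Adj (Ee a) (Ee (a + 1)) := by
    intro a
    rw [SimpleGraph.lineGraph_adj_iff_exists]
    refine ⟨fun h => ?_, v (a + 1), by simp [hEe], by simp [hEe]⟩
    have h2 := hEEc a (a + 1) h
    apply absurd h10
    simp only [ne_eq, not_not]
    linear_combination -h2
  have hthree : ∀ (f : G.edgeSet) (a : ZMod n), v a ∈ (f : Sym2 V) →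
      f = Ee (a - 1) ∨ f = Ee a ∨ f = Mm a := by
    rintro ⟨z, hzmem⟩ a hmem
    simp only [Sym2.mem_iff_exists] at hmem
    obtain ⟨y, rfl⟩ := hmem
    rw [SimpleGraph.mem_edgeSet] at hzmem
    rcases hw4 a y hzmem with rfl | rfl | rfl
    · refine Or.inl (Subtype.ext ?_)
      show s(v a, v (a - 1)) = s(v (a - 1), v (a - 1 + 1))
      rw [sub_add_cancel, Sym2.eq_swap]
    · exact Or.inr (Or.inl rfl)
    · refine Or.inr (Or.inr (Subtype.ext ?_))
      show s(v a, w a) = s(v a, v (σ a))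
      rw [hσ a]
  have hcover : ∀ f : G.edgeSet, ∃ a, f = Ee a ∨ f = Mm a := by
    rintro ⟨z, hzmem⟩
    induction z using Sym2.ind with
    | _ x y =>
      obtain ⟨a, rfl⟩ := hvsurj x
      rcases hthree ⟨s(v a, y), hzmem⟩ a (by simp) with h | h | h
      · exact ⟨a - 1, Or.inl h⟩
      · exact ⟨a, Or.inl h⟩
      · exact ⟨a, Or.inr h⟩
  -- the predicate choosing where each matching edge is inserted
  set P : ZMod n → Prop := fun i => i.val < (σ i).val with hP
  haveI hPdec : DecidablePred P := fun i => by simp only [hP]; exact Nat.decLt _ _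
  have hQP : ∀ a, P a ↔ ¬ P (σ a) := by
    intro a
    have hne : a.val ≠ (σ a).val := fun h => hσi a (hvalinj _ _ h.symm)
    simp only [hP, hσσ a]
    omega
  have hQP' : ∀ a, (¬ P a) ↔ ¬ ¬ P (σ a) := by
    intro a
    rw [not_not]
    have h1 := hQP (σ a)
    rw [hσσ a] at h1
    exact h1.symm
  obtain ⟨b1, p, hp, hpE⟩ := kzBuild (Q := P) (H := G.lineGraph) (E := Ee) (M := Mm) (σ := σ)
    hn hσ1 hEEc hMEc hMMc haME haEM haEE hcover hQP
  obtain ⟨b2, q, hq, hqE⟩ := kzBuild (Q := fun a => ¬ P a) (H := G.lineGraph) (E := Ee)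
    (M := Mm) (σ := σ) hn hσ1 hEEc hMEc hMMc haME haEM haEE hcover hQP'
  have dMM1 : ∀ a : ZMod n, Mm a ≠ Mm (a + 1) := by
    intro a h
    rcases (hMMc a (a + 1)).mp h with h' | h'
    · exact h10 (by linear_combination h')
    · exact hσ1 a h'.symm
  have D11 : ∀ a b : ZMod n, s(Mm a, Ee a) = s(Mm b, Ee b) → a = b := by
    intro a b h
    rw [Sym2.eq_iff] at h
    rcases h with ⟨h1, h2⟩ | ⟨h1, h2⟩
    · exact hEEc _ _ h2
    · exact absurd h1 (hMEc _ _)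
  have D12 : ∀ a b : ZMod n, s(Mm a, Ee a) ≠ s(Ee b, Mm (b + 1)) := by
    intro a b h
    rw [Sym2.eq_iff] at h
    rcases h with ⟨h1, h2⟩ | ⟨h1, h2⟩
    · exact hMEc _ _ h1
    · have hab := hEEc _ _ h2
      subst hab
      exact dMM1 a h1
  have D13 : ∀ a b : ZMod n, s(Mm a, Ee a) ≠ s(Ee b, Ee (b + 1)) := by
    intro a b h
    rw [Sym2.eq_iff] at h
    rcases h with ⟨h1, _⟩ | ⟨h1, _⟩ <;> exact hMEc _ _ h1
  have D22 : ∀ a b : ZMod n, s(Ee a, Mm (a + 1)) = s(Ee b, Mm (b + 1)) → a = b := by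
    intro a b h
    rw [Sym2.eq_iff] at h
    rcases h with ⟨h1, _⟩ | ⟨h1, h2⟩
    · exact hEEc _ _ h1
    · exact absurd h1.symm (hMEc _ _)
  have D23 : ∀ a b : ZMod n, s(Ee a, Mm (a + 1)) ≠ s(Ee b, Ee (b + 1)) := by
    intro a b h
    rw [Sym2.eq_iff] at h
    rcases h with ⟨_, h2⟩ | ⟨_, h2⟩ <;> exact hMEc _ _ h2
  have D33 : ∀ a b : ZMod n, s(Ee a, Ee (a + 1)) = s(Ee b, Ee (b + 1)) → a = b := by
    intro a b h
    rw [Sym2.eq_iff] at h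
    rcases h with ⟨h1, _⟩ | ⟨h1, h2⟩
    · exact hEEc _ _ h1
    · have e1 := hEEc _ _ h1
      have e2 := hEEc _ _ h2
      apply absurd h20
      simp only [ne_eq, not_not]
      linear_combination e2 - e1
  refine ⟨b1, b2, p, q, hp, hq, ?_, ?_⟩
  · rw [Set.disjoint_left]
    intro z hzp hzq
    simp only [Set.mem_setOf_eq] at hzp hzq
    rw [hpE] at hzp
    rw [hqE] at hzq
    obtain ⟨a, ha⟩ := hzp
    obtain ⟨b, hb⟩ := hzq
    rcases ha with ⟨hc1, rfl⟩ | ⟨hc1, rfl⟩ | ⟨hc1, rfl⟩ <;>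
      rcases hb with ⟨hc2, hzb⟩ | ⟨hc2, hzb⟩ | ⟨hc2, hzb⟩
    · obtain rfl := D11 _ _ hzb; exact hc2 hc1
    · exact D12 _ _ hzb
    · exact D13 _ _ hzb
    · exact D12 _ _ hzb.symm
    · obtain rfl := D22 _ _ hzb; exact hc2 hc1
    · exact D23 _ _ hzb
    · exact D13 _ _ hzb.symm
    · exact D23 _ _ hzb.symm
    · obtain rfl := D33 _ _ hzb; exact hc2 hc1
  · apply Set.eq_of_subset_of_subset
    · rintro z (hz | hz) <;> simp only [Set.mem_setOf_eq] at hz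
      · rw [hpE] at hz
        obtain ⟨a, ⟨_, rfl⟩ | ⟨_, rfl⟩ | ⟨_, rfl⟩⟩ := hz
        · exact (G.lineGraph).mem_edgeSet.mpr (haME a)
        · exact (G.lineGraph).mem_edgeSet.mpr (haEM a)
        · exact (G.lineGraph).mem_edgeSet.mpr (haEE a)
      · rw [hqE] at hz
        obtain ⟨a, ⟨_, rfl⟩ | ⟨_, rfl⟩ | ⟨_, rfl⟩⟩ := hz
        · exact (G.lineGraph).mem_edgeSet.mpr (haME a)
        · exact (G.lineGraph).mem_edgeSet.mpr (haEM a)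
        · exact (G.lineGraph).mem_edgeSet.mpr (haEE a)
    · intro z hz
      induction z using Sym2.ind with
      | _ f g =>
        rw [SimpleGraph.mem_edgeSet, SimpleGraph.lineGraph_adj_iff_exists] at hz
        obtain ⟨hfg, x, hxf, hxg⟩ := hz
        obtain ⟨a, rfl⟩ := hvsurj x
        have hF1 : ∀ b : ZMod n, s(Mm b, Ee b) ∈ {x | x ∈ p.edges} ∪ {x | x ∈ q.edges} := by
          intro b
          by_cases hpb : P b
          · exact Set.mem_union_left _ ((hpE _).mpr ⟨b, Or.inl ⟨hpb, rfl⟩⟩)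
          · exact Set.mem_union_right _ ((hqE _).mpr ⟨b, Or.inl ⟨hpb, rfl⟩⟩)
        have hF2 : ∀ b : ZMod n, s(Ee b, Mm (b + 1)) ∈ {x | x ∈ p.edges} ∪ {x | x ∈ q.edges} := by
          intro b
          by_cases hpb : P (b + 1)
          · exact Set.mem_union_left _ ((hpE _).mpr ⟨b, Or.inr (Or.inl ⟨hpb, rfl⟩)⟩)
          · exact Set.mem_union_right _ ((hqE _).mpr ⟨b, Or.inr (Or.inl ⟨hpb, rfl⟩)⟩)
        have hF3 : ∀ b : ZMod n, s(Ee b, Ee (b + 1)) ∈ {x | x ∈ p.edges} ∪ {x | x ∈ q.edges} := by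
          intro b
          by_cases hpb : P (b + 1)
          · exact Set.mem_union_right _ ((hqE _).mpr ⟨b, Or.inr (Or.inr ⟨not_not.mpr hpb, rfl⟩)⟩)
          · exact Set.mem_union_left _ ((hpE _).mpr ⟨b, Or.inr (Or.inr ⟨hpb, rfl⟩)⟩)
        rcases hthree f a hxf with rfl | rfl | rfl <;> rcases hthree g a hxg with rfl | rfl | rfl
        · exact absurd rfl hfg
        · have h := hF3 (a - 1); rwa [sub_add_cancel] at h
        · have h := hF2 (a - 1); rwa [sub_add_cancel] at h
        · rw [Sym2.eq_swap]
          have h := hF3 (a - 1); rwa [sub_add_cancel] at h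
        · exact absurd rfl hfg
        · rw [Sym2.eq_swap]; exact hF1 a
        · rw [Sym2.eq_swap]
          have h := hF2 (a - 1); rwa [sub_add_cancel] at h
        · exact hF1 a
        · exact absurd rfl hfg
end

section
/- Let G be a simple 3-regular graph whose line graph L(G) decomposes into two Hamiltonian cycles. Then G has a Hamiltonian cycle. -/
open SimpleGraph

set_option linter.unusedSectionVars false
set_option linter.unusedVariables false
set_option maxHeartbeats 1600000

namespace KotzigAux


variable {V : Type*} [DecidableEq V]

lemma getLast?_cons_ne_nil {a : V} {l : List V} (h : l ≠ []) :
    (a :: l).getLast? = l.getLast? := by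
  cases l with
  | nil => exact absurd rfl h
  | cons b t => exact List.getLast?_cons_cons

/-- collapse consecutive duplicates -/
def collapse : List V → List V
  | [] => []
  | [a] => [a]
  | a :: b :: t => if a = b then collapse (b :: t) else a :: collapse (b :: t)

@[simp] lemma collapse_nil : (collapse ([] : List V)) = [] := rfl
@[simp] lemma collapse_single (a : V) : collapse [a] = [a] := rfl

lemma collapse_cons_cons (a b : V) (t : List V) :
    collapse (a :: b :: t) = if a = b then collapse (b :: t) else a :: collapse (b :: t) := rfl

lemma collapse_head? : ∀ (a : V) (t : List V), (collapse (a :: t)).head? = some a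
  | a, [] => rfl
  | a, b :: t => by
    rw [collapse_cons_cons]
    split
    · next h => rw [h]; exact collapse_head? b t
    · rfl

lemma collapse_ne_nil (a : V) (t : List V) : collapse (a :: t) ≠ [] := by
  intro h
  have := collapse_head? a t
  rw [h] at this; simp at this

lemma collapse_getLast? : ∀ (l : List V), (collapse l).getLast? = l.getLast?
  | [] => rfl
  | [a] => rfl
  | a :: b :: t => by
    rw [collapse_cons_cons]
    split
    · rw [collapse_getLast? (b :: t), List.getLast?_cons_cons]
    · rw [List.getLast?_cons_cons, ← collapse_getLast? (b :: t)]
      exact getLast?_cons_ne_nil (collapse_ne_nil b t)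

lemma mem_collapse : ∀ {x : V} (l : List V), x ∈ collapse l ↔ x ∈ l
  | x, [] => Iff.rfl
  | x, [a] => Iff.rfl
  | x, a :: b :: t => by
    rw [collapse_cons_cons]
    split
    · next h => subst h; rw [mem_collapse (a :: t)]; simp
    · simp [mem_collapse (b :: t)]

lemma collapse_chain' {R : V → V → Prop} :
    ∀ (l : List V), List.Chain' (fun x y => x = y ∨ R x y) l → List.Chain' R (collapse l)
  | [], _ => List.isChain_nil
  | [a], _ => List.isChain_singleton a
  | a :: b :: t, h => by
    rw [List.Chain', List.isChain_cons_cons] at h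
    rw [collapse_cons_cons]
    split
    · exact collapse_chain' (b :: t) h.2
    · next hne =>
      rw [List.Chain', List.isChain_cons]
      refine ⟨?_, collapse_chain' (b :: t) h.2⟩
      intro y hy
      rw [collapse_head? b t] at hy
      cases hy
      exact h.1.resolve_left hne

/-- no duplicates at distance ≥ 2 -/
def Spread (l : List V) : Prop := ∀ i j x, i + 2 ≤ j → l[i]? = some x → l[j]? = some x → False

lemma Spread.tail {a : V} {t : List V} (h : Spread (a :: t)) : Spread t := by
  intro i j x hij hi hj
  exact h (i+1) (j+1) x (by omega) hi hj

lemma collapse_nodup : ∀ (l : List V), Spread l → (collapse l).Nodup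
  | [], _ => List.nodup_nil
  | [a], _ => List.nodup_singleton a
  | a :: b :: t, h => by
    rw [collapse_cons_cons]
    split
    · exact collapse_nodup _ h.tail
    · next hne =>
      refine List.nodup_cons.2 ⟨?_, collapse_nodup _ h.tail⟩
      intro hmem
      rw [mem_collapse] at hmem
      obtain ⟨k, hk⟩ := List.mem_iff_getElem?.1 hmem
      cases k with
      | zero => simp at hk; exact hne hk.symm
      | succ k' =>
        exact h 0 (k' + 2) a (by omega) rfl hk



lemma getLast?_eq_getLastD : ∀ (a : V) (t : List V), (a :: t).getLast? = some (t.getLastD a)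
  | _, [] => rfl
  | a, b :: t => by
    rw [List.getLast?_cons_cons, getLast?_eq_getLastD b t, List.getLastD_cons]




variable {V : Type*} {G : SimpleGraph V}

/-- Build a walk from a chain of adjacent vertices. -/
def chainWalk : (x : V) → (t : List V) → List.Chain G.Adj x t → G.Walk x (t.getLastD x)
  | _, [], _ => SimpleGraph.Walk.nil
  | x, y :: t', ch =>
    (SimpleGraph.Walk.cons (List.chain_cons.1 ch).1
      (chainWalk y t' (List.chain_cons.1 ch).2)).copy rfl (List.getLastD_cons (a := x) (b := y) (l := t')).symm

lemma chainWalk_support : ∀ (x : V) (t : List V) (ch : List.Chain G.Adj x t),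
    (chainWalk x t ch).support = x :: t
  | x, [], _ => rfl
  | x, y :: t', ch => by
    simp only [chainWalk, SimpleGraph.Walk.support_copy, SimpleGraph.Walk.support_cons]
    exact congrArg (x :: ·) (chainWalk_support y t' _)

lemma chainWalk_length : ∀ (x : V) (t : List V) (ch : List.Chain G.Adj x t),
    (chainWalk x t ch).length = t.length
  | x, [], _ => rfl
  | x, y :: t', ch => by
    simp only [chainWalk, SimpleGraph.Walk.length_copy, SimpleGraph.Walk.length_cons]
    exact congrArg (· + 1) (chainWalk_length y t' _)

lemma closing_not_mem_edges : ∀ {x y : V} (W : G.Walk x y), W.support.Nodup → 2 ≤ W.length →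
    s(y, x) ∉ W.edges := by
  intro x y W
  induction W with
  | nil => simp
  | @cons x b y h W' ih =>
    intro hnd hlen hmem
    rw [SimpleGraph.Walk.edges_cons] at hmem
    rw [SimpleGraph.Walk.support_cons, List.nodup_cons] at hnd
    rcases List.mem_cons.1 hmem with hm | hm
    · have hyb : y = b := by
        rw [Sym2.eq_iff] at hm
        rcases hm with ⟨h1, h2⟩ | ⟨h1, _⟩
        · exact h1.trans h2
        · exact h1
      subst hyb
      have : W'.length = 0 := by
        cases W' with
        | nil => rfl
        | @cons _ c _ h' W'' =>
          exfalso
          have h1 : y ∈ W''.support := SimpleGraph.Walk.end_mem_support _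
          have h2 := hnd.2
          rw [SimpleGraph.Walk.support_cons, List.nodup_cons] at h2
          exact h2.1 h1
      rw [SimpleGraph.Walk.length_cons, this] at hlen
      omega
    · exact hnd.1 (SimpleGraph.Walk.snd_mem_support_of_mem_edges W' hm)

/-- `support.get?` in terms of `getVert`. -/
lemma support_get? : ∀ {x y : V} (W : G.Walk x y) (i : ℕ), i ≤ W.length →
    W.support[i]? = some (W.getVert i) := by
  intro x y W
  induction W with
  | nil => intro i hi; simp at hi; subst hi; rfl
  | @cons x b y h W' ih =>
    intro i hi
    cases i with
    | zero => rfl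
    | succ i' =>
      rw [SimpleGraph.Walk.support_cons]
      simpa using ih i' (by simpa [SimpleGraph.Walk.length_cons] using hi)

lemma edges_get? : ∀ {x y : V} (W : G.Walk x y) (i : ℕ), i < W.length →
    W.edges[i]? = some s(W.getVert i, W.getVert (i + 1)) := by
  intro x y W
  induction W with
  | nil => intro i hi; simp at hi
  | @cons x b y h W' ih =>
    intro i hi
    cases i with
    | zero => simp [SimpleGraph.Walk.edges_cons, SimpleGraph.Walk.getVert_zero,
        SimpleGraph.Walk.getVert_cons_succ]
    | succ i' =>
      rw [SimpleGraph.Walk.edges_cons]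
      simpa [SimpleGraph.Walk.getVert_cons_succ] using
        ih i' (by simpa [SimpleGraph.Walk.length_cons] using hi)



variable {V : Type*} [Fintype V] [DecidableEq V] {G : SimpleGraph V} [DecidableRel G.Adj]

/-- chosen shared vertex of two edges -/
noncomputable def shV (e f : G.edgeSet) : V :=
  if h : ∃ x, x ∈ (e : Sym2 V) ∧ x ∈ (f : Sym2 V) then h.choose else (Quot.out (e : Sym2 V)).1

lemma shV_spec {e f : G.edgeSet} (h : (G.lineGraph).Adj e f) :
    shV e f ∈ (e : Sym2 V) ∧ shV e f ∈ (f : Sym2 V) := by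
  rw [lineGraph_adj_iff_exists] at h
  rw [shV, dif_pos h.2]
  exact h.2.choose_spec

lemma shared_unique {e f : G.edgeSet} (hne : e ≠ f) {x y : V}
    (hxe : x ∈ (e : Sym2 V)) (hxf : x ∈ (f : Sym2 V))
    (hye : y ∈ (e : Sym2 V)) (hyf : y ∈ (f : Sym2 V)) : x = y := by
  by_contra hxy
  have he : (e : Sym2 V) = s(x, y) := (Sym2.mem_and_mem_iff hxy).1 ⟨hxe, hye⟩
  have hf : (f : Sym2 V) = s(x, y) := (Sym2.mem_and_mem_iff hxy).1 ⟨hxf, hyf⟩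
  exact hne (Subtype.ext (he.trans hf.symm))

variable {a : G.edgeSet} (p : (G.lineGraph).Walk a a)

/-- edge at cyclic position i -/
def eV (i : ℕ) : G.edgeSet := p.getVert (i % p.length)

/-- transition vertex between positions i and i+1 -/
noncomputable def tv (i : ℕ) : V := shV (eV p i) (eV p (i + 1))

variable {p}

lemma getVert_mod_eq (hn : 1 ≤ p.length) {k : ℕ} (hk : k ≤ p.length) :
    p.getVert (k % p.length) = p.getVert k := by
  rcases lt_or_eq_of_le hk with h | h
  · rw [Nat.mod_eq_of_lt h]
  · subst h
    rw [Nat.mod_self, SimpleGraph.Walk.getVert_zero, SimpleGraph.Walk.getVert_length]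

lemma eV_succ (hn : 2 ≤ p.length) (i : ℕ) : eV p (i + 1) = p.getVert (i % p.length + 1) := by
  have hlt : i % p.length < p.length := Nat.mod_lt _ (by omega)
  rw [eV, Nat.add_mod, Nat.mod_eq_of_lt (show 1 < p.length by omega)]
  exact getVert_mod_eq (by omega) (by omega)

lemma adjE (hn : 2 ≤ p.length) (i : ℕ) : (G.lineGraph).Adj (eV p i) (eV p (i + 1)) := by
  rw [eV_succ hn]
  exact p.adj_getVert_succ (Nat.mod_lt _ (by omega))

lemma tv_mem1 (hn : 2 ≤ p.length) (i : ℕ) : tv p i ∈ (eV p i : Sym2 V) :=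
  (shV_spec (adjE hn i)).1

lemma tv_mem2 (hn : 2 ≤ p.length) (i : ℕ) : tv p i ∈ (eV p (i + 1) : Sym2 V) :=
  (shV_spec (adjE hn i)).2

lemma tv_unique (hn : 2 ≤ p.length) {i : ℕ} {x : V}
    (h1 : x ∈ (eV p i : Sym2 V)) (h2 : x ∈ (eV p (i + 1) : Sym2 V)) : x = tv p i :=
  shared_unique (adjE hn i).ne h1 h2 (tv_mem1 hn i) (tv_mem2 hn i)

lemma eV_mod (i : ℕ) : eV p (i % p.length) = eV p i := by
  rw [eV, eV, Nat.mod_mod]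

lemma tv_mod (hn : 2 ≤ p.length) (i : ℕ) : tv p (i % p.length) = tv p i := by
  have h1 : eV p (i % p.length) = eV p i := eV_mod i
  have h2 : eV p (i % p.length + 1) = eV p (i + 1) := by
    rw [eV_succ hn, eV_succ hn, Nat.mod_mod]
  rw [tv, tv, h1, h2]

lemma tv_adjV (hn : 2 ≤ p.length) (i : ℕ) (hne : tv p i ≠ tv p (i + 1)) :
    G.Adj (tv p i) (tv p (i + 1)) := by
  have h1 : tv p i ∈ (eV p (i + 1) : Sym2 V) := tv_mem2 hn i
  have h2 : tv p (i + 1) ∈ (eV p (i + 1) : Sym2 V) := tv_mem1 hn (i + 1)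
  have he : (eV p (i + 1) : Sym2 V) = s(tv p i, tv p (i + 1)) :=
    (Sym2.mem_and_mem_iff hne).1 ⟨h1, h2⟩
  have := (eV p (i + 1)).property
  rw [he] at this
  exact (SimpleGraph.mem_edgeSet G).1 this

lemma getVert_eq_mod (hp : p.IsHamiltonianCycle) {i j : ℕ}
    (hi : i ≤ p.length) (hj : j ≤ p.length) (h : p.getVert i = p.getVert j) :
    i % p.length = j % p.length := by
  have hn : 1 ≤ p.length := by
    have := hp.isCycle.three_le_length
    omega
  set n := p.length with hndef
  set i' := if i = 0 then n else i with hi'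
  set j' := if j = 0 then n else j with hj'
  have hgi : p.getVert i' = p.getVert i := by
    rw [hi']; split
    · next hz => subst hz; rw [SimpleGraph.Walk.getVert_length, SimpleGraph.Walk.getVert_zero]
    · rfl
  have hgj : p.getVert j' = p.getVert j := by
    rw [hj']; split
    · next hz => subst hz; rw [SimpleGraph.Walk.getVert_length, SimpleGraph.Walk.getVert_zero]
    · rfl
  have hib : 1 ≤ i' ∧ i' ≤ n := by rw [hi']; split <;> omega
  have hjb : 1 ≤ j' ∧ j' ≤ n := by rw [hj']; split <;> omega
  have hlen : p.support.tail.length = n := by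
    have h1 := p.length_support
    conv_lhs at h1 => rw [p.support_eq_cons]
    simp only [List.length_cons] at h1
    omega
  have hti : p.support.tail[i' - 1]? = some (p.getVert i') := by
    have := support_get? p i' hib.2
    rw [p.support_eq_cons] at this
    rw [← this]
    obtain ⟨k, hk⟩ : ∃ k, i' = k + 1 := ⟨i' - 1, by omega⟩
    rw [hk]
    simp
  have htj : p.support.tail[j' - 1]? = some (p.getVert j') := by
    have := support_get? p j' hjb.2
    rw [p.support_eq_cons] at this
    rw [← this]
    obtain ⟨k, hk⟩ : ∃ k, j' = k + 1 := ⟨j' - 1, by omega⟩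
    rw [hk]
    simp
  have heq : i' = j' := by
    have hget : p.support.tail[i' - 1]? = p.support.tail[j' - 1]? := by
      rw [hti, htj, hgi, hgj, h]
    have hinj := (List.getElem?_inj (by omega : i' - 1 < p.support.tail.length)
      hp.isCycle.support_nodup).1 hget
    omega
  have hmi : i' % n = i % n := by
    rw [hi']; split
    · next hz => subst hz; simp
    · rfl
  have hmj : j' % n = j % n := by
    rw [hj']; split
    · next hz => subst hz; simp
    · rfl
  rw [← hmi, ← hmj, heq]


lemma edges_inj (hp : p.IsHamiltonianCycle) {i j : ℕ}
    (hi : i < p.length) (hj : j < p.length)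
    (h : s(p.getVert i, p.getVert (i + 1)) = s(p.getVert j, p.getVert (j + 1))) : i = j := by
  have h1 := edges_get? p i hi
  have h2 := edges_get? p j hj
  have hget : p.edges[i]? = p.edges[j]? := by rw [h1, h2, h]
  exact (List.getElem?_inj (by rw [p.length_edges]; exact hi)
    hp.isCycle.isCircuit.isTrail.edges_nodup).1 hget

lemma mem_edges_iff' {x : Sym2 G.edgeSet} :
    x ∈ p.edges ↔ ∃ i, i < p.length ∧ x = s(p.getVert i, p.getVert (i + 1)) := by
  constructor
  · intro hx
    obtain ⟨k, hk⟩ := List.mem_iff_getElem?.1 hx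
    have hkl : k < p.edges.length := by
      by_contra hc
      rw [List.getElem?_eq_none_iff.2 (by omega)] at hk
      cases hk
    rw [p.length_edges] at hkl
    refine ⟨k, hkl, ?_⟩
    have := edges_get? p k hkl
    rw [this] at hk
    exact (Option.some_inj.1 hk).symm
  · rintro ⟨i, hi, rfl⟩
    exact List.mem_of_getElem? (edges_get? p i hi)

lemma getVert_mem_incidence (hreg : G.IsRegularOfDegree 3) {x : V} {k : ℕ}
    (hx : x ∈ (p.getVert k : Sym2 V)) : ((p.getVert k : G.edgeSet) : Sym2 V) ∈ G.incidenceFinset x := by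
  rw [SimpleGraph.mem_incidenceFinset]
  exact ⟨(p.getVert k).property, hx⟩

lemma tv_close (hp : p.IsHamiltonianCycle) (hreg : G.IsRegularOfDegree 3)
    (hn : 6 ≤ p.length) {i j : ℕ} (hi : i < p.length) (hj : j < p.length) (hij : i ≠ j)
    (h : tv p i = tv p j) :
    (j = i + 1 ∨ (i + 1 = p.length ∧ j = 0)) ∨ (i = j + 1 ∨ (j + 1 = p.length ∧ i = 0)) := by
  set n := p.length with hndef
  have hn2 : 2 ≤ n := by omega
  set x := tv p i with hxdef
  have hxA : x ∈ (p.getVert i : Sym2 V) := by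
    have := tv_mem1 hn2 i
    rwa [eV, Nat.mod_eq_of_lt hi] at this
  have hxB : x ∈ (p.getVert (i + 1) : Sym2 V) := by
    have := tv_mem2 hn2 i
    rwa [eV, getVert_mod_eq (by omega) (by omega : i + 1 ≤ n)] at this
  have hxC : x ∈ (p.getVert j : Sym2 V) := by
    have := tv_mem1 hn2 j
    rwa [eV, Nat.mod_eq_of_lt hj, ← h] at this
  have hxD : x ∈ (p.getVert (j + 1) : Sym2 V) := by
    have := tv_mem2 hn2 j
    rwa [eV, getVert_mod_eq (by omega) (by omega : j + 1 ≤ n), ← h] at this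
  have hAB : p.getVert i ≠ p.getVert (i + 1) := (p.adj_getVert_succ hi).ne
  have hCD : p.getVert j ≠ p.getVert (j + 1) := (p.adj_getVert_succ hj).ne
  have hover : p.getVert i = p.getVert j ∨ p.getVert i = p.getVert (j + 1) ∨
      p.getVert (i + 1) = p.getVert j ∨ p.getVert (i + 1) = p.getVert (j + 1) := by
    by_contra hc
    push_neg at hc
    obtain ⟨hc1, hc2, hc3, hc4⟩ := hc
    have hsub : ({((p.getVert i : G.edgeSet) : Sym2 V), ((p.getVert (i+1) : G.edgeSet) : Sym2 V),
        ((p.getVert j : G.edgeSet) : Sym2 V), ((p.getVert (j+1) : G.edgeSet) : Sym2 V)} : Finset (Sym2 V))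
        ⊆ G.incidenceFinset x := by
      intro e he
      simp only [Finset.mem_insert, Finset.mem_singleton] at he
      rcases he with rfl | rfl | rfl | rfl
      · exact getVert_mem_incidence hreg hxA
      · exact getVert_mem_incidence hreg hxB
      · exact getVert_mem_incidence hreg hxC
      · exact getVert_mem_incidence hreg hxD
    have hcard := Finset.card_le_card hsub
    rw [SimpleGraph.card_incidenceFinset_eq_degree, hreg x] at hcard
    have hv : ∀ (e f : G.edgeSet), e ≠ f → (e : Sym2 V) ≠ (f : Sym2 V) := by
      intro e f hef hc
      exact hef (Subtype.ext hc)
    have h4 : ({((p.getVert i : G.edgeSet) : Sym2 V), ((p.getVert (i+1) : G.edgeSet) : Sym2 V),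
        ((p.getVert j : G.edgeSet) : Sym2 V), ((p.getVert (j+1) : G.edgeSet) : Sym2 V)} : Finset (Sym2 V)).card = 4 := by
      rw [Finset.card_insert_of_notMem, Finset.card_insert_of_notMem,
        Finset.card_insert_of_notMem, Finset.card_singleton]
      · simp only [Finset.mem_singleton]
        exact hv _ _ hCD
      · simp only [Finset.mem_insert, Finset.mem_singleton]
        push_neg
        exact ⟨hv _ _ hc3, hv _ _ hc4⟩
      · simp only [Finset.mem_insert, Finset.mem_singleton]
        push_neg
        exact ⟨hv _ _ hAB, hv _ _ hc1, hv _ _ hc2⟩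
    omega
  have key : ∀ s s' : ℕ, s ≤ n → s' ≤ n → p.getVert s = p.getVert s' → s % n = s' % n :=
    fun s s' hs hs' hss => getVert_eq_mod hp hs hs' hss
  rcases hover with hov | hov | hov | hov
  · exact absurd (by
      have := key i j (by omega) (by omega) hov
      rwa [Nat.mod_eq_of_lt hi, Nat.mod_eq_of_lt hj] at this) hij
  · have := key i (j+1) (by omega) (by omega) hov
    rw [Nat.mod_eq_of_lt hi] at this
    rcases Nat.lt_or_ge (j+1) n with hlt | hge
    · rw [Nat.mod_eq_of_lt hlt] at this
      right; left; exact this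
    · have hjn : j + 1 = n := by omega
      rw [hjn, Nat.mod_self] at this
      right; right; exact ⟨hjn, this⟩
  · have := key (i+1) j (by omega) (by omega) hov
    rw [Nat.mod_eq_of_lt hj] at this
    rcases Nat.lt_or_ge (i+1) n with hlt | hge
    · rw [Nat.mod_eq_of_lt hlt] at this
      left; left; exact this.symm
    · have hin : i + 1 = n := by omega
      rw [hin, Nat.mod_self] at this
      left; right; exact ⟨hin, this.symm⟩
  · have := key (i+1) (j+1) (by omega) (by omega) hov
    exfalso
    rcases Nat.lt_or_ge (i+1) n with hlt | hge
    · rw [Nat.mod_eq_of_lt hlt] at this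
      rcases Nat.lt_or_ge (j+1) n with hlt' | hge'
      · rw [Nat.mod_eq_of_lt hlt'] at this; omega
      · have : i + 1 = 0 := by
          have hjn : j + 1 = n := by omega
          rwa [hjn, Nat.mod_self] at this
        omega
    · have hin : i + 1 = n := by omega
      rw [hin, Nat.mod_self] at this
      rcases Nat.lt_or_ge (j+1) n with hlt' | hge'
      · rw [Nat.mod_eq_of_lt hlt'] at this; omega
      · have hjn : j + 1 = n := by omega
        omega

lemma tv_three (hp : p.IsHamiltonianCycle) (hreg : G.IsRegularOfDegree 3)
    (hn : 6 ≤ p.length) {i j k : ℕ} (hi : i < p.length) (hj : j < p.length) (hk : k < p.length)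
    (hij : i ≠ j) (hik : i ≠ k) (hjk : j ≠ k)
    (h1 : tv p i = tv p j) (h2 : tv p i = tv p k) : False := by
  have c1 := tv_close hp hreg hn hi hj hij h1
  have c2 := tv_close hp hreg hn hi hk hik h2
  have c3 := tv_close hp hreg hn hj hk hjk (h1 ▸ h2)
  omega









lemma tv_of_edge {b : G.edgeSet} {q : (G.lineGraph).Walk b b} (hn : 2 ≤ q.length)
    {x : V} {i : ℕ} (hi : i < q.length)
    (h1 : x ∈ (q.getVert i : Sym2 V)) (h2 : x ∈ (q.getVert (i + 1) : Sym2 V)) :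
    x = tv q i := by
  apply tv_unique hn
  · rwa [eV, Nat.mod_eq_of_lt hi]
  · rwa [eV, getVert_mod_eq (by omega) (by omega : i + 1 ≤ q.length)]

lemma tv_exists {a b : G.edgeSet} {p : (G.lineGraph).Walk a a} {q : (G.lineGraph).Walk b b}
    (hp : p.IsHamiltonianCycle) (hq : q.IsHamiltonianCycle)
    (hreg : G.IsRegularOfDegree 3)
    (hnp : 6 ≤ p.length) (hnq : 6 ≤ q.length)
    (hcover : {x | x ∈ p.edges} ∪ {x | x ∈ q.edges} = (G.lineGraph).edgeSet)
    (x : V) : ∃ i, i < p.length ∧ tv p i = x := by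
  by_contra hc
  push_neg at hc
  have hcard3 : (G.incidenceFinset x).card = 3 := by
    rw [SimpleGraph.card_incidenceFinset_eq_degree, hreg x]
  obtain ⟨f₁, f₂, f₃, h12, h13, h23, hset⟩ := Finset.card_eq_three.1 hcard3
  have hmem : ∀ f ∈ G.incidenceFinset x, f ∈ G.edgeSet ∧ x ∈ f := by
    intro f hf
    rw [SimpleGraph.mem_incidenceFinset] at hf
    exact hf
  have hm1 := hmem f₁ (by rw [hset]; simp)
  have hm2 := hmem f₂ (by rw [hset]; simp)
  have hm3 := hmem f₃ (by rw [hset]; simp)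
  set F₁ : G.edgeSet := ⟨f₁, hm1.1⟩ with hF1
  set F₂ : G.edgeSet := ⟨f₂, hm2.1⟩ with hF2
  set F₃ : G.edgeSet := ⟨f₃, hm3.1⟩ with hF3
  have key : ∀ (Fa Fb : G.edgeSet), Fa ≠ Fb → x ∈ (Fa : Sym2 V) → x ∈ (Fb : Sym2 V) →
      s(Fa, Fb) ∈ q.edges := by
    intro Fa Fb hne hxa hxb
    have hadj : (G.lineGraph).Adj Fa Fb := by
      rw [lineGraph_adj_iff_exists]
      exact ⟨hne, x, hxa, hxb⟩
    have hedge : s(Fa, Fb) ∈ (G.lineGraph).edgeSet := (SimpleGraph.mem_edgeSet _).2 hadj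
    rw [← hcover] at hedge
    rcases hedge with hpe | hqe
    · exfalso
      obtain ⟨i, hi, heq⟩ := mem_edges_iff'.1 hpe
      rw [Sym2.eq_iff] at heq
      have hxx : x ∈ (p.getVert i : Sym2 V) ∧ x ∈ (p.getVert (i+1) : Sym2 V) := by
        rcases heq with ⟨ha, hb⟩ | ⟨ha, hb⟩
        · rw [← ha, ← hb]; exact ⟨hxa, hxb⟩
        · rw [← ha, ← hb]; exact ⟨hxb, hxa⟩
      exact hc i hi (tv_of_edge (by omega) hi hxx.1 hxx.2).symm
    · exact hqe
  have e12 := key F₁ F₂ (fun h => h12 (congrArg Subtype.val h)) hm1.2 hm2.2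
  have e13 := key F₁ F₃ (fun h => h13 (congrArg Subtype.val h)) hm1.2 hm3.2
  have e23 := key F₂ F₃ (fun h => h23 (congrArg Subtype.val h)) hm2.2 hm3.2
  obtain ⟨i₁, hi₁, heq₁⟩ := mem_edges_iff'.1 e12
  obtain ⟨i₂, hi₂, heq₂⟩ := mem_edges_iff'.1 e13
  obtain ⟨i₃, hi₃, heq₃⟩ := mem_edges_iff'.1 e23
  have ht : ∀ (Fa Fb : G.edgeSet) (i : ℕ), i < q.length → x ∈ (Fa : Sym2 V) → x ∈ (Fb : Sym2 V) →
      s(Fa, Fb) = s(q.getVert i, q.getVert (i+1)) → tv q i = x := by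
    intro Fa Fb i hi hxa hxb heq
    rw [Sym2.eq_iff] at heq
    have hxx : x ∈ (q.getVert i : Sym2 V) ∧ x ∈ (q.getVert (i+1) : Sym2 V) := by
      rcases heq with ⟨ha, hb⟩ | ⟨ha, hb⟩
      · exact ⟨ha ▸ hxa, hb ▸ hxb⟩
      · exact ⟨hb ▸ hxb, ha ▸ hxa⟩
    exact (tv_of_edge (by omega) hi hxx.1 hxx.2).symm
  have ht₁ := ht F₁ F₂ i₁ hi₁ hm1.2 hm2.2 heq₁
  have ht₂ := ht F₁ F₃ i₂ hi₂ hm1.2 hm3.2 heq₂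
  have ht₃ := ht F₂ F₃ i₃ hi₃ hm2.2 hm3.2 heq₃
  have hval : ∀ (Fa Fb : G.edgeSet), Fa = Fb → (Fa : Sym2 V) = (Fb : Sym2 V) :=
    fun _ _ h => congrArg Subtype.val h
  have hne12 : i₁ ≠ i₂ := by
    rintro rfl
    have h := heq₁.trans heq₂.symm
    rw [Sym2.eq_iff] at h
    rcases h with ⟨_, hb⟩ | ⟨ha, _⟩
    · exact h23 (hval _ _ hb)
    · exact h13 (hval _ _ ha)
  have hne13 : i₁ ≠ i₃ := by
    rintro rfl
    have h := heq₁.trans heq₃.symm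
    rw [Sym2.eq_iff] at h
    rcases h with ⟨ha, hb⟩ | ⟨ha, hb⟩
    · exact h12 (hval _ _ ha)
    · exact h13 (hval _ _ ha)
  have hne23 : i₂ ≠ i₃ := by
    rintro rfl
    have h := heq₂.trans heq₃.symm
    rw [Sym2.eq_iff] at h
    rcases h with ⟨ha, hb⟩ | ⟨ha, hb⟩
    · exact h12 (hval _ _ ha)
    · exact h23 (hval _ _ hb.symm)
  exact tv_three hq hreg hnq hi₁ hi₂ hi₃ hne12 hne13 hne23
    (ht₁.trans ht₂.symm) (ht₁.trans ht₃.symm)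



end KotzigAux

open KotzigAux

theorem cubic_hamiltonian_of_lineGraph_decomp {V : Type*} [Fintype V] [DecidableEq V]
    (G : SimpleGraph V) [DecidableRel G.Adj]
    (hreg : G.IsRegularOfDegree 3)
    (hdec : (G.lineGraph).DecompTwoHamCycles) :
    ∃ (a : V) (c : G.Walk a a), c.IsHamiltonianCycle := by
  classical
  obtain ⟨a, b, p, q, hp, hq, hdisj, hcover⟩ := hdec
  -- cardinalities
  have hV4 : 4 ≤ Fintype.card V := by
    have hdeg := G.degree_lt_card_verts (Quot.out (a : Sym2 V)).1
    rw [hreg _] at hdeg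
    omega
  have hEcard : 2 * Fintype.card G.edgeSet = 3 * Fintype.card V := by
    have hsum := G.sum_degrees_eq_twice_card_edges
    have hsum3 : ∑ v, G.degree v = 3 * Fintype.card V := by
      rw [Finset.sum_congr rfl (fun v _ => hreg v)]
      simp [Finset.sum_const, Finset.card_univ, mul_comm]
    rw [hsum3, G.edgeFinset_card] at hsum
    omega
  have hnp : 6 ≤ p.length := by rw [hp.length_eq]; omega
  have hnq : 6 ≤ q.length := by rw [hq.length_eq]; omega
  set n := p.length with hndef
  have hn2 : 2 ≤ n := by omega
  have hex : ∀ x : V, ∃ i, i < n ∧ tv p i = x := tv_exists hp hq hreg hnp hnq hcover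
  -- a place where the transition vertex changes
  obtain ⟨m, hm⟩ : ∃ m, tv p m ≠ tv p (m + 1) := by
    by_contra hcon
    push_neg at hcon
    have hconst : ∀ i, tv p i = tv p 0 := by
      intro i
      induction i with
      | zero => rfl
      | succ k ih => rw [← hcon k]; exact ih
    obtain ⟨x, y, hxy⟩ := Fintype.exists_pair_of_one_lt_card (by omega : 1 < Fintype.card V)
    obtain ⟨i, _, hix⟩ := hex x
    obtain ⟨j, _, hjy⟩ := hex y
    exact hxy (by rw [← hix, ← hjy, hconst i, hconst j])
  set w : ℕ → V := fun i => tv p (m + 1 + i) with hw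
  have hwlast : w (n - 1) = tv p m := by
    show tv p (m + 1 + (n - 1)) = tv p m
    rw [show m + 1 + (n - 1) = m + n by omega, ← tv_mod hn2 (m + n),
      Nat.add_mod_right, tv_mod hn2 m]
  have hw0 : w 0 = tv p (m + 1) := rfl
  have hwrap_ne : w (n - 1) ≠ w 0 := by rw [hwlast, hw0]; exact hm
  have hwrap_adj : G.Adj (w (n - 1)) (w 0) := by
    rw [hwlast, hw0]; exact tv_adjV hn2 m hm
  -- step adjacency
  have hstep_adj : ∀ i, w i ≠ w (i + 1) → G.Adj (w i) (w (i + 1)) := by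
    intro i hne
    exact tv_adjV hn2 (m + 1 + i) hne
  -- duplicates are consecutive
  have hdup : ∀ i j, i < j → j < n → w i = w j → j = i + 1 := by
    intro i j hij hjn heq
    set A := (m + 1 + i) % n with hA
    set B := (m + 1 + j) % n with hB
    have hAn : A < n := Nat.mod_lt _ (by omega)
    have hBn : B < n := Nat.mod_lt _ (by omega)
    have htvAB : tv p A = tv p B := by
      rw [hA, hB, tv_mod hn2, tv_mod hn2]; exact heq
    have hABne : A ≠ B := by
      intro hAB
      rw [hA, hB] at hAB
      have hmj : i % n = j % n := Nat.ModEq.add_left_cancel' (m + 1) hAB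
      rw [Nat.mod_eq_of_lt (by omega), Nat.mod_eq_of_lt hjn] at hmj
      omega
    have hstep1 : (m + 1 + (i + 1)) % n = (A + 1) % n := by
      rw [show m + 1 + (i + 1) = (m + 1 + i) + 1 by omega, Nat.add_mod (m + 1 + i) 1 n, ← hA,
        Nat.mod_eq_of_lt (show 1 < n by omega)]
    have hstep2 : (m + 1 + (j + 1)) % n = (B + 1) % n := by
      rw [show m + 1 + (j + 1) = (m + 1 + j) + 1 by omega, Nat.add_mod (m + 1 + j) 1 n, ← hB,
        Nat.mod_eq_of_lt (show 1 < n by omega)]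
    have key1 : (m + 1 + j) % n = (m + 1 + (i + 1)) % n → j = i + 1 := by
      intro hk
      have hmj : j % n = (i + 1) % n := Nat.ModEq.add_left_cancel' (m + 1) hk
      rw [Nat.mod_eq_of_lt hjn] at hmj
      rcases Nat.lt_or_ge (i + 1) n with h | h
      · rw [Nat.mod_eq_of_lt h] at hmj; omega
      · rw [show i + 1 = n by omega, Nat.mod_self] at hmj; omega
    have key2 : (m + 1 + i) % n = (m + 1 + (j + 1)) % n → j = i + 1 := by
      intro hk
      have hmj : i % n = (j + 1) % n := Nat.ModEq.add_left_cancel' (m + 1) hk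
      rw [Nat.mod_eq_of_lt (by omega : i < n)] at hmj
      rcases Nat.lt_or_ge (j + 1) n with h | h
      · rw [Nat.mod_eq_of_lt h] at hmj; omega
      · rw [show j + 1 = n by omega, Nat.mod_self] at hmj
        exact absurd (by rw [show i = 0 by omega] at heq
                         rw [show j = n - 1 by omega] at heq
                         exact heq.symm) hwrap_ne
    rcases tv_close hp hreg hnp hAn hBn hABne htvAB with (h1 | h1) | (h1 | h1)
    · exact key1 (by rw [hstep1, ← hB, h1, Nat.mod_eq_of_lt (h1 ▸ hBn)])
    · exact key1 (by rw [hstep1, ← hB, h1.2, h1.1, Nat.mod_self])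
    · exact key2 (by rw [hstep2, ← hA, h1, Nat.mod_eq_of_lt (h1 ▸ hAn)])
    · exact key2 (by rw [hstep2, ← hA, h1.2, h1.1, Nat.mod_self])
  -- the list of transition vertices starting at m+1
  set l : List V := List.ofFn (fun k : Fin n => w k) with hl
  have hllen : l.length = n := by rw [hl, List.length_ofFn]
  have hlget : ∀ i, i < n → l[i]? = some (w i) := by
    intro i hi
    rw [hl, List.getElem?_ofFn]
    simp [hi]
  have hlchain : List.Chain' (fun x y => x = y ∨ G.Adj x y) l := by
    rw [hl, List.Chain', List.isChain_ofFn]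
    intro i hi
    simp only
    by_cases h : w i = w (i + 1)
    · exact Or.inl h
    · exact Or.inr (hstep_adj i h)
  have hspread : Spread l := by
    intro i j x hij hi hj
    have hjn : j < n := by
      obtain ⟨hlt, -⟩ := List.getElem?_eq_some_iff.1 hj
      omega
    have hin : i < n := by omega
    rw [hlget i hin] at hi
    rw [hlget j hjn] at hj
    have heq : w i = w j :=
      (Option.some_inj.1 hi).trans (Option.some_inj.1 hj).symm
    have := hdup i j (by omega) hjn heq
    omega
  obtain ⟨t, hlt⟩ : ∃ t, l = w 0 :: t := by
    have h0 := hlget 0 (by omega)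
    obtain ⟨c, t, hct⟩ := List.exists_cons_of_ne_nil
      (show l ≠ [] by intro h; rw [h] at hllen; simp at hllen; omega)
    rw [hct] at h0
    simp only [List.getElem?_cons_zero] at h0
    exact ⟨t, by rw [hct, Option.some_inj.1 h0]⟩
  set l' : List V := collapse l with hl'
  have hl'chain : List.Chain' G.Adj l' := collapse_chain' l hlchain
  have hl'nodup : l'.Nodup := collapse_nodup l hspread
  have hl'mem : ∀ x : V, x ∈ l' := by
    intro x
    rw [hl', mem_collapse]
    obtain ⟨i, hi, hix⟩ := hex x
    set r := (m + 1) % n with hr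
    have hrn : r < n := Nat.mod_lt _ (by omega)
    set j := (i + n - r) % n with hj
    have hjn : j < n := Nat.mod_lt _ (by omega)
    have hwj : w j = x := by
      show tv p (m + 1 + j) = x
      rw [← tv_mod hn2 (m + 1 + j)]
      have hmod : (m + 1 + j) % n = i := by
        have h1 : (m + 1 + j) % n = (r + j) % n := by
          rw [Nat.add_mod (m + 1) j n, ← hr, Nat.mod_eq_of_lt hjn]
        have h2 : (r + (i + n - r)) % n = (r + j) % n := by
          rw [Nat.add_mod r (i + n - r) n, Nat.mod_eq_of_lt hrn, ← hj]
        have h3 : r + (i + n - r) = i + n := by omega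
        have h4 : (i + n) % n = i := by rw [Nat.add_mod_right, Nat.mod_eq_of_lt hi]
        rw [h1, ← h2, h3, h4]
      rw [hmod, hix]
    rw [← hwj, hl]
    exact List.mem_ofFn.2 ⟨⟨j, hjn⟩, rfl⟩
  have hl'len : l'.length = Fintype.card V := by
    have h1 : l'.toFinset.card = l'.length := List.toFinset_card_of_nodup hl'nodup
    have h2 : l'.toFinset = Finset.univ := Finset.eq_univ_iff_forall.2
      (fun x => List.mem_toFinset.2 (hl'mem x))
    rw [h2, Finset.card_univ] at h1
    omega
  obtain ⟨t', hlt'⟩ : ∃ t', l' = w 0 :: t' := by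
    have hh : l'.head? = some (w 0) := by rw [hl', hlt]; exact collapse_head? _ _
    obtain ⟨c, t', hct⟩ := List.exists_cons_of_ne_nil
      (show l' ≠ [] by rw [hl', hlt]; exact collapse_ne_nil _ _)
    rw [hct] at hh
    simp only [List.head?] at hh
    exact ⟨t', by rw [hct, Option.some_inj.1 hh]⟩
  have hch : List.Chain G.Adj (w 0) t' := by
    have := hl'chain
    rw [hlt'] at this
    exact this
  set z : V := t'.getLastD (w 0) with hz
  have hzlast : z = w (n - 1) := by
    have h1 : l'.getLast? = l.getLast? := collapse_getLast? l
    have h2 : l.getLast? = some (w (n - 1)) := by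
      rw [List.getLast?_eq_getElem?, hllen]
      exact hlget (n - 1) (by omega)
    have h3 : l'.getLast? = some z := by rw [hlt', getLast?_eq_getLastD]
    rw [h1, h2] at h3
    exact (Option.some_inj.1 h3).symm
  set cw : G.Walk (w 0) z := chainWalk (w 0) t' hch with hcw
  have hcwsupp : cw.support = l' := by rw [hcw, chainWalk_support, hlt']
  have hcwnodup : cw.support.Nodup := by rw [hcwsupp]; exact hl'nodup
  have hcwpath : cw.IsPath := SimpleGraph.Walk.IsPath.mk' hcwnodup
  have hcwlen : 2 ≤ cw.length := by
    rw [hcw, chainWalk_length]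
    have : t'.length + 1 = l'.length := by rw [hlt']; rfl
    omega
  have hadjz : G.Adj z (w 0) := by rw [hzlast]; exact hwrap_adj
  have hclose : s(z, w 0) ∉ cw.edges := closing_not_mem_edges cw hcwnodup hcwlen
  set c : G.Walk z z := SimpleGraph.Walk.cons hadjz cw with hc
  have hcyc : c.IsCycle := SimpleGraph.Path.cons_isCycle ⟨cw, hcwpath⟩ hadjz hclose
  refine ⟨z, c, ?_⟩
  rw [SimpleGraph.Walk.isHamiltonianCycle_iff_isCycle_and_support_count_tail_eq_one]
  refine ⟨hcyc, ?_⟩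
  intro x
  have hsupp : c.support = z :: cw.support := by rw [hc, SimpleGraph.Walk.support_cons]
  rw [hsupp]
  simp only [List.tail_cons]
  rw [hcwsupp]
  exact List.count_eq_one_of_mem hl'nodup (hl'mem x)
end

section
/- Let G be a simple graph with no isolated vertices whose line graph L(G) decomposes into two Hamiltonian cycles. Then exactly one of the following holds: G is isomorphic to the star K_{1,5}; G is 3-regular; or G is (4,2)-biregular. -/
open SimpleGraph

/-- A simple graph is (4,2)-biregular: every vertex has degree 4 or 2, and every
edge joins a degree-4 vertex to a degree-2 vertex. -/
def SimpleGraph.IsBiregular42 {V : Type*} (G : SimpleGraph V)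
    [∀ v, Fintype (G.neighborSet v)] : Prop :=
  (∀ v, G.degree v = 4 ∨ G.degree v = 2) ∧
  ∀ ⦃u v⦄, G.Adj u v →
    (G.degree u = 4 ∧ G.degree v = 2) ∨ (G.degree u = 2 ∧ G.degree v = 4)

namespace DegTriAux

open Walk Set

section Walks

variable {W : Type*} {H : SimpleGraph W}

lemma pathEnd : ∀ {b x : W} (q : H.Walk b x), q.IsPath → b ≠ x →
    ∃ y, {w : W | s(x, w) ∈ q.edges} = {y} := by
  intro b x q
  induction q with
  | nil => intro _ hbx; exact absurd rfl hbx
  | @cons b c x h r ih =>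
    intro hq hbx
    by_cases hcx : c = x
    · subst hcx
      have hr : r = Walk.nil := by
        have := SimpleGraph.Path.loop_eq (⟨r, hq.of_cons⟩ : H.Path c c)
        exact congrArg Subtype.val this
      subst hr
      refine ⟨b, ?_⟩
      ext w
      simp only [Walk.edges_cons, Walk.edges_nil, Set.mem_setOf_eq,
        Set.mem_singleton_iff, List.mem_cons, List.not_mem_nil, or_false]
      constructor
      · intro hw
        rw [Sym2.eq_iff] at hw
        rcases hw with ⟨h1, h2⟩ | ⟨h1, h2⟩
        · exact absurd h1.symm hbx
        · exact h2
      · rintro rfl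
        rw [Sym2.eq_iff]; right; exact ⟨rfl, rfl⟩
    · obtain ⟨y, hy⟩ := ih hq.of_cons hcx
      refine ⟨y, ?_⟩
      ext w
      simp only [Walk.edges_cons, Set.mem_setOf_eq, List.mem_cons]
      constructor
      · rintro (hw | hw)
        · exfalso
          have hx : x ∈ s(b, c) := by rw [← hw]; exact Sym2.mem_mk_left x w
          rw [Sym2.mem_iff] at hx
          rcases hx with rfl | rfl
          · exact hbx rfl
          · exact hcx rfl
        · exact (Set.ext_iff.mp hy w).mp hw
      · intro hw
        right
        have : w ∈ {w : W | s(x, w) ∈ r.edges} := hy ▸ hw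
        exact this

lemma cycle_two_base {x : W} (p : H.Walk x x) (hp : p.IsCycle) :
    ∃ y z, y ≠ z ∧ {w : W | s(x, w) ∈ p.edges} = {y, z} := by
  cases p with
  | nil => exact absurd rfl hp.ne_nil
  | @cons _ b _ h q =>
    rw [Walk.cons_isCycle_iff] at hp
    obtain ⟨y, hy⟩ := pathEnd q hp.1 h.ne'
    have hymem : s(x, y) ∈ q.edges := by
      have : y ∈ {w : W | s(x, w) ∈ q.edges} := hy ▸ rfl
      exact this
    refine ⟨b, y, ?_, ?_⟩
    · rintro rfl; exact hp.2 hymem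
    · ext w
      simp only [Walk.edges_cons, Set.mem_setOf_eq, List.mem_cons, Set.mem_insert_iff,
        Set.mem_singleton_iff]
      constructor
      · rintro (hw | hw)
        · left; exact (Sym2.congr_right.mp hw)
        · right
          have : w ∈ {w : W | s(x, w) ∈ q.edges} := hw
          rw [hy] at this; exact this
      · rintro (rfl | rfl)
        · left; rfl
        · right; exact hymem

lemma cycle_two [DecidableEq W] {a x : W} (p : H.Walk a a) (hp : p.IsCycle)
    (hx : x ∈ p.support) :
    ∃ y z, y ≠ z ∧ {w : W | s(x, w) ∈ p.edges} = {y, z} := by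
  obtain ⟨y, z, hyz, hs⟩ := cycle_two_base (p.rotate x hx) (hp.rotate hx)
  refine ⟨y, z, hyz, ?_⟩
  rw [← hs]
  ext w
  simp only [Set.mem_setOf_eq]
  exact Iff.symm ((p.rotate_edges x hx).mem_iff)

lemma cycle_two_ncard [DecidableEq W] {a x : W} (p : H.Walk a a) (hp : p.IsCycle)
    (hx : x ∈ p.support) :
    {w : W | s(x, w) ∈ p.edges}.ncard = 2 := by
  obtain ⟨y, z, hyz, hs⟩ := cycle_two p hp hx
  rw [hs]
  exact Set.ncard_pair hyz

lemma propagate {Q : W → Prop} (hQ : ∀ {e f : W}, H.Adj e f → Q e → Q f)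
    {e f : W} (w : H.Walk e f) : Q e → Q f := by
  induction w with
  | nil => exact id
  | cons h _ ih => exact fun he => ih (hQ h he)

end Walks

variable {V : Type*} [Fintype V] [DecidableEq V] (G : SimpleGraph V) [DecidableRel G.Adj]

lemma ncard_incidenceSet (u : V) : (G.incidenceSet u).ncard = G.degree u := by
  rw [← Nat.card_coe_set_eq, Nat.card_eq_fintype_card,
    SimpleGraph.card_incidenceSet_eq_degree]

lemma degree_sum_of_adj {u v : V} (huv : G.Adj u v)
    (h4 : {f : G.edgeSet | G.lineGraph.Adj ⟨s(u, v), huv⟩ f}.ncard = 4) :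
    G.degree u + G.degree v = 6 := by
  set A := G.incidenceSet u with hA
  set B := G.incidenceSet v with hB
  have himg : Subtype.val '' {f : G.edgeSet | G.lineGraph.Adj ⟨s(u, v), huv⟩ f}
      = (A ∪ B) \ {s(u, v)} := by
    ext g
    simp only [Set.mem_image, Set.mem_setOf_eq, Set.mem_diff, Set.mem_union,
      Set.mem_singleton_iff]
    constructor
    · rintro ⟨f, hf, rfl⟩
      rw [SimpleGraph.lineGraph_adj_iff_exists] at hf
      obtain ⟨hne, w, hw1, hw2⟩ := hf
      have hwuv : w = u ∨ w = v := Sym2.mem_iff.mp hw1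
      refine ⟨?_, fun hval => hne (Subtype.ext hval.symm)⟩
      rcases hwuv with rfl | rfl
      · exact Or.inl ⟨f.2, hw2⟩
      · exact Or.inr ⟨f.2, hw2⟩
    · rintro ⟨hAB, hne⟩
      have hgE : g ∈ G.edgeSet := by rcases hAB with h | h <;> exact h.1
      refine ⟨⟨g, hgE⟩, ?_, rfl⟩
      rw [SimpleGraph.lineGraph_adj_iff_exists]
      refine ⟨fun hc => hne (congrArg Subtype.val hc).symm, ?_⟩
      rcases hAB with h | h
      · exact ⟨u, Sym2.mem_mk_left u v, h.2⟩
      · exact ⟨v, Sym2.mem_mk_right u v, h.2⟩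
  have h1 : {f : G.edgeSet | G.lineGraph.Adj ⟨s(u, v), huv⟩ f}.ncard
      = ((A ∪ B) \ {s(u, v)}).ncard := by
    rw [← himg, Set.ncard_image_of_injective _ Subtype.val_injective]
  have hmem : s(u, v) ∈ A ∪ B := Or.inl (G.mk'_mem_incidenceSet_left_iff.mpr huv)
  have h2 : ((A ∪ B) \ {s(u, v)}).ncard + 1 = (A ∪ B).ncard :=
    Set.ncard_diff_singleton_add_one hmem (Set.toFinite _)
  have h3 : (A ∪ B).ncard + (A ∩ B).ncard = A.ncard + B.ncard :=
    Set.ncard_union_add_ncard_inter A B (Set.toFinite _) (Set.toFinite _)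
  have h4' : A ∩ B = {s(u, v)} := G.incidenceSet_inter_incidenceSet_of_adj huv
  have h5 : A.ncard = G.degree u := ncard_incidenceSet G u
  have h6 : B.ncard = G.degree v := ncard_incidenceSet G v
  rw [h4', Set.ncard_singleton] at h3
  omega

lemma lineDeg4 (hdec : (G.lineGraph).DecompTwoHamCycles) (e : G.edgeSet) :
    {f : G.edgeSet | G.lineGraph.Adj e f}.ncard = 4 := by
  obtain ⟨a, b, p, q, hp, hq, hdisj, hunion⟩ := hdec
  have hP : {f : G.edgeSet | s(e, f) ∈ p.edges}.ncard = 2 :=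
    cycle_two_ncard p hp.isCycle (hp.mem_support e)
  have hQ2 : {f : G.edgeSet | s(e, f) ∈ q.edges}.ncard = 2 :=
    cycle_two_ncard q hq.isCycle (hq.mem_support e)
  have hSet : {f : G.edgeSet | G.lineGraph.Adj e f}
      = {f : G.edgeSet | s(e, f) ∈ p.edges} ∪ {f : G.edgeSet | s(e, f) ∈ q.edges} := by
    ext f
    simp only [Set.mem_setOf_eq, Set.mem_union]
    rw [← SimpleGraph.mem_edgeSet, ← hunion]
    simp
  have hd : Disjoint {f : G.edgeSet | s(e, f) ∈ p.edges}
      {f : G.edgeSet | s(e, f) ∈ q.edges} := by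
    rw [Set.disjoint_left]
    intro f hf1 hf2
    exact (Set.disjoint_left.mp hdisj) hf1 hf2
  rw [hSet, Set.ncard_union_eq hd (Set.toFinite _) (Set.toFinite _), hP, hQ2]

lemma lineReach (hdec : (G.lineGraph).DecompTwoHamCycles) (e f : G.edgeSet) :
    Nonempty (G.lineGraph.Walk e f) := by
  obtain ⟨a, b, p, q, hp, hq, hdisj, hunion⟩ := hdec
  exact ⟨(p.takeUntil e (hp.mem_support e)).reverse.append (p.takeUntil f (hp.mem_support f))⟩

instance : DecidableRel (completeBipartiteGraph (Fin 1) (Fin 5)).Adj := fun a b =>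
  decidable_of_iff (a.isLeft ∧ b.isRight ∨ a.isRight ∧ b.isLeft) Iff.rfl

lemma deg5_of_iso (h : Nonempty (G ≃g completeBipartiteGraph (Fin 1) (Fin 5))) :
    ∃ v, G.degree v = 5 := by
  obtain ⟨f⟩ := h
  refine ⟨f.symm (Sum.inl 0), ?_⟩
  have h1 : G.degree (f.symm (Sum.inl 0))
      = (completeBipartiteGraph (Fin 1) (Fin 5)).degree (f (f.symm (Sum.inl 0))) := by
    rw [← SimpleGraph.card_neighborSet_eq_degree, ← SimpleGraph.card_neighborSet_eq_degree]
    exact Fintype.card_congr (f.mapNeighborSet _)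
  rw [h1, RelIso.apply_symm_apply]
  decide

lemma star_iso (u : V) (hadj : ∀ x y : V, G.Adj x y ↔ (x = u ∧ y ≠ u) ∨ (y = u ∧ x ≠ u))
    (hcard : Fintype.card {x : V // x ≠ u} = 5) :
    Nonempty (G ≃g completeBipartiteGraph (Fin 1) (Fin 5)) := by
  let e2 : {x : V // x ≠ u} ≃ Fin 5 := Fintype.equivFinOfCardEq hcard
  refine ⟨⟨⟨fun x => if h : x = u then Sum.inl 0 else Sum.inr (e2 ⟨x, h⟩),
    fun s => Sum.elim (fun _ => u) (fun i => (e2.symm i).1) s, ?_, ?_⟩, ?_⟩⟩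
  · intro x
    by_cases h : x = u
    · simp [h]
    · simp only [dif_neg h, Sum.elim_inr]
      have : e2.symm (e2 ⟨x, h⟩) = ⟨x, h⟩ := e2.symm_apply_apply _
      rw [this]
  · intro s
    cases s with
    | inl i =>
      dsimp only [Sum.elim_inl]
      rw [dif_pos rfl]
      exact congrArg Sum.inl (Subsingleton.elim _ _)
    | inr i =>
      have h := (e2.symm i).2
      dsimp only [Sum.elim_inr]
      rw [dif_neg h]
      refine congrArg Sum.inr ?_
      rw [show (⟨(e2.symm i).1, h⟩ : {x : V // x ≠ u}) = e2.symm i from Subtype.ext rfl]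
      exact e2.apply_symm_apply i
  · intro x y
    by_cases hx : x = u <;> by_cases hy : y = u
    · subst hx; subst hy
      simp [completeBipartiteGraph, hadj]
    · subst hx
      simp [dif_pos rfl, dif_neg hy, completeBipartiteGraph, hadj, hy]
    · subst hy
      simp [dif_pos rfl, dif_neg hx, completeBipartiteGraph, hadj, hx]
    · simp [dif_neg hx, dif_neg hy, completeBipartiteGraph, hadj, hx, hy]

end DegTriAux

theorem degree_trichotomy {V : Type*} [Fintype V] [DecidableEq V]
    (G : SimpleGraph V) [DecidableRel G.Adj]
    (hiso : ∀ v, 0 < G.degree v)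
    (hdec : (G.lineGraph).DecompTwoHamCycles) :
    ((Nonempty (G ≃g completeBipartiteGraph (Fin 1) (Fin 5))) ∧
      ¬ G.IsRegularOfDegree 3 ∧ ¬ G.IsBiregular42) ∨
    (¬ (Nonempty (G ≃g completeBipartiteGraph (Fin 1) (Fin 5))) ∧
      G.IsRegularOfDegree 3 ∧ ¬ G.IsBiregular42) ∨
    (¬ (Nonempty (G ≃g completeBipartiteGraph (Fin 1) (Fin 5))) ∧
      ¬ G.IsRegularOfDegree 3 ∧ G.IsBiregular42) := by
  have hsum : ∀ {u v : V}, G.Adj u v → G.degree u + G.degree v = 6 := by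
    intro u v huv
    exact DegTriAux.degree_sum_of_adj G huv (DegTriAux.lineDeg4 G hdec ⟨s(u, v), huv⟩)
  have hex : ∀ v : V, ∃ x, G.Adj v x := fun v =>
    (SimpleGraph.degree_pos_iff_exists_adj G v).mp (hiso v)
  have hle5 : ∀ v, 1 ≤ G.degree v ∧ G.degree v ≤ 5 := by
    intro v
    obtain ⟨x, hx⟩ := hex v
    have h1 := hsum hx
    have h2 := hiso x
    exact ⟨hiso v, by omega⟩
  have hprop : ∀ (Q : G.edgeSet → Prop),
      (∀ {e f : G.edgeSet}, G.lineGraph.Adj e f → Q e → Q f) →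
      ∀ e f : G.edgeSet, Q e → Q f := by
    intro Q hQ e f hQe
    obtain ⟨w⟩ := DegTriAux.lineReach G hdec e f
    exact DegTriAux.propagate hQ w hQe
  by_cases h3 : ∃ w, G.degree w = 3
  · -- 3-regular case
    obtain ⟨w0, hw0⟩ := h3
    obtain ⟨x0, hx0⟩ := hex w0
    have hQstep : ∀ {e f : G.edgeSet}, G.lineGraph.Adj e f →
        (∀ z ∈ (e : Sym2 V), G.degree z = 3) → (∀ z ∈ (f : Sym2 V), G.degree z = 3) := by
      intro e f hef hQe z hz
      rw [SimpleGraph.lineGraph_adj_iff_exists] at hef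
      obtain ⟨hne, w, hw1, hw2⟩ := hef
      have hdw : G.degree w = 3 := hQe w hw1
      obtain ⟨t, ht⟩ := Sym2.mem_iff_exists.mp hw2
      have hadj : G.Adj w t := by
        rw [← SimpleGraph.mem_edgeSet, ← ht]; exact f.2
      have hdt : G.degree t = 3 := by have := hsum hadj; omega
      rw [ht] at hz
      rcases Sym2.mem_iff.mp hz with rfl | rfl
      · exact hdw
      · exact hdt
    have hQ0 : ∀ z ∈ (s(w0, x0) : Sym2 V), G.degree z = 3 := by
      intro z hz
      rcases Sym2.mem_iff.mp hz with rfl | rfl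
      · exact hw0
      · have := hsum hx0; omega
    have hreg : G.IsRegularOfDegree 3 := by
      intro v
      obtain ⟨x, hx⟩ := hex v
      have hQf := hprop (fun e => ∀ z ∈ (e : Sym2 V), G.degree z = 3) hQstep
        ⟨s(w0, x0), hx0⟩ ⟨s(v, x), hx⟩ hQ0
      exact hQf v (Sym2.mem_mk_left v x)
    refine Or.inr (Or.inl ⟨?_, hreg, ?_⟩)
    · rintro ⟨f⟩
      obtain ⟨v5, hv5⟩ := DegTriAux.deg5_of_iso G ⟨f⟩
      have := hreg v5; omega
    · rintro ⟨hb1, -⟩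
      have := hb1 w0; omega
  · by_cases h24 : ∃ w, G.degree w = 2 ∨ G.degree w = 4
    · -- (4,2)-biregular case
      obtain ⟨w0, hw0⟩ := h24
      obtain ⟨x0, hx0⟩ := hex w0
      have hQstep : ∀ {e f : G.edgeSet}, G.lineGraph.Adj e f →
          (∀ z ∈ (e : Sym2 V), G.degree z = 2 ∨ G.degree z = 4) →
          (∀ z ∈ (f : Sym2 V), G.degree z = 2 ∨ G.degree z = 4) := by
        intro e f hef hQe z hz
        rw [SimpleGraph.lineGraph_adj_iff_exists] at hef
        obtain ⟨hne, w, hw1, hw2⟩ := hef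
        have hdw := hQe w hw1
        obtain ⟨t, ht⟩ := Sym2.mem_iff_exists.mp hw2
        have hadj : G.Adj w t := by
          rw [← SimpleGraph.mem_edgeSet, ← ht]; exact f.2
        have hdt : G.degree t = 2 ∨ G.degree t = 4 := by have := hsum hadj; omega
        rw [ht] at hz
        rcases Sym2.mem_iff.mp hz with rfl | rfl
        · exact hdw
        · exact hdt
      have hQ0 : ∀ z ∈ (s(w0, x0) : Sym2 V), G.degree z = 2 ∨ G.degree z = 4 := by
        intro z hz
        rcases Sym2.mem_iff.mp hz with rfl | rfl
        · exact hw0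
        · have := hsum hx0; omega
      have hall : ∀ v, G.degree v = 2 ∨ G.degree v = 4 := by
        intro v
        obtain ⟨x, hx⟩ := hex v
        have hQf := hprop (fun e => ∀ z ∈ (e : Sym2 V), G.degree z = 2 ∨ G.degree z = 4)
          hQstep ⟨s(w0, x0), hx0⟩ ⟨s(v, x), hx⟩ hQ0
        exact hQf v (Sym2.mem_mk_left v x)
      have hbi : G.IsBiregular42 := by
        constructor
        · intro v
          rcases hall v with h | h
          · exact Or.inr h
          · exact Or.inl h
        · intro u v huv
          have h1 := hall u
          have h2 := hall v
          have h3 := hsum huv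
          omega
      refine Or.inr (Or.inr ⟨?_, ?_, hbi⟩)
      · rintro ⟨f⟩
        obtain ⟨v5, hv5⟩ := DegTriAux.deg5_of_iso G ⟨f⟩
        have := hall v5; omega
      · intro hreg
        have := hreg w0
        omega
    · -- star case
      have hall : ∀ v, G.degree v = 1 ∨ G.degree v = 5 := by
        intro v
        have h1 := (hle5 v).1
        have h2 := (hle5 v).2
        have hn3 : G.degree v ≠ 3 := fun h => h3 ⟨v, h⟩
        have hn24 : ¬(G.degree v = 2 ∨ G.degree v = 4) := fun h => h24 ⟨v, h⟩
        omega
      have hex_edge : ∃ u v : V, G.Adj u v := by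
        obtain ⟨a, -, -, -, -, -, -, -⟩ := hdec
        obtain ⟨e, he⟩ := a
        revert he
        refine Sym2.ind (fun u v he => ⟨u, v, he⟩) e
      have hhub : ∃ u v : V, G.Adj u v ∧ G.degree u = 5 := by
        obtain ⟨u1, v1, huv1⟩ := hex_edge
        rcases hall u1 with h | h
        · refine ⟨v1, u1, huv1.symm, ?_⟩
          have := hsum huv1; omega
        · exact ⟨u1, v1, huv1, h⟩
      obtain ⟨u, v, huv, hu5⟩ := hhub
      have hQstep : ∀ {e f : G.edgeSet}, G.lineGraph.Adj e f →
          u ∈ (e : Sym2 V) → u ∈ (f : Sym2 V) := by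
        intro e f hef hQe
        rw [SimpleGraph.lineGraph_adj_iff_exists] at hef
        obtain ⟨hne, w, hw1, hw2⟩ := hef
        by_cases hwu : w = u
        · subst hwu; exact hw2
        · exfalso
          have hne' : u ≠ w := fun h => hwu h.symm
          have heuw : (e : Sym2 V) = s(u, w) := (Sym2.mem_and_mem_iff hne').mp ⟨hQe, hw1⟩
          have hadj : G.Adj u w := by
            rw [← SimpleGraph.mem_edgeSet, ← heuw]; exact e.2
          have hw1' : G.degree w = 1 := by have := hsum hadj; omega
          have hinc : (G.incidenceSet w).ncard = 1 := by
            rw [DegTriAux.ncard_incidenceSet]; exact hw1'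
          obtain ⟨c, hc⟩ := Set.ncard_eq_one.mp hinc
          have he_in : (e : Sym2 V) ∈ G.incidenceSet w := ⟨e.2, hw1⟩
          have hf_in : (f : Sym2 V) ∈ G.incidenceSet w := ⟨f.2, hw2⟩
          rw [hc, Set.mem_singleton_iff] at he_in hf_in
          exact hne (Subtype.ext (he_in.trans hf_in.symm))
      have hQall : ∀ f : G.edgeSet, u ∈ (f : Sym2 V) := fun f =>
        hprop (fun e => u ∈ (e : Sym2 V)) hQstep ⟨s(u, v), huv⟩ f (Sym2.mem_mk_left u v)
      have hadj_char : ∀ x y : V, G.Adj x y ↔ (x = u ∧ y ≠ u) ∨ (y = u ∧ x ≠ u) := by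
        intro x y
        constructor
        · intro hxy
          have hu_in : u ∈ s(x, y) := hQall ⟨s(x, y), hxy⟩
          rcases Sym2.mem_iff.mp hu_in with h | h
          · exact Or.inl ⟨h.symm, fun hy => hxy.ne (h.symm.trans hy.symm ▸ rfl)⟩
          · exact Or.inr ⟨h.symm, fun hx => hxy.ne ((hx.trans h).symm ▸ rfl)⟩
        · rintro (⟨rfl, hy⟩ | ⟨rfl, hx⟩)
          · obtain ⟨t, ht⟩ := hex y
            have hu_in : x ∈ s(y, t) := hQall ⟨s(y, t), ht⟩
            rcases Sym2.mem_iff.mp hu_in with h | h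
            · exact absurd h.symm hy
            · subst h; exact ht.symm
          · obtain ⟨t, ht⟩ := hex x
            have hu_in : y ∈ s(x, t) := hQall ⟨s(x, t), ht⟩
            rcases Sym2.mem_iff.mp hu_in with h | h
            · exact absurd h.symm hx
            · subst h; exact ht
      have hNu : G.neighborFinset u = Finset.univ.erase u := by
        ext y
        rw [SimpleGraph.mem_neighborFinset, Finset.mem_erase]
        rw [hadj_char u y]
        constructor
        · rintro (⟨-, hy⟩ | ⟨rfl, hu⟩)
          · exact ⟨hy, Finset.mem_univ y⟩
          · exact absurd rfl hu
        · rintro ⟨hy, -⟩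
          exact Or.inl ⟨rfl, hy⟩
      have hcardV : Fintype.card V = 6 := by
        have hdu : G.degree u = Fintype.card V - 1 := by
          rw [← SimpleGraph.card_neighborFinset_eq_degree, hNu,
            Finset.card_erase_of_mem (Finset.mem_univ u), Finset.card_univ]
        have hpos : 0 < Fintype.card V := Fintype.card_pos_iff.mpr ⟨u⟩
        omega
      have hcard5 : Fintype.card {x : V // x ≠ u} = 5 := by
        have h := Fintype.card_subtype_compl (fun x : V => x = u)
        have h2 : Fintype.card {x : V // x = u} = 1 := Fintype.card_subtype_eq u
        have h3 : Fintype.card {x : V // x ≠ u} = Fintype.card {x : V // ¬ x = u} :=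
          Fintype.card_congr (Equiv.subtypeEquivRight (fun x => Iff.rfl))
        rw [h3, h, h2, hcardV]
      have hisoK : Nonempty (G ≃g completeBipartiteGraph (Fin 1) (Fin 5)) :=
        DegTriAux.star_iso G u hadj_char hcard5
      refine Or.inl ⟨hisoK, ?_, ?_⟩
      · intro hreg
        have := hreg u; omega
      · rintro ⟨hb1, -⟩
        have := hb1 u; omega
end

section
/- Let G be a simple 3-regular graph and suppose the edge set of L(G) is the disjoint union of the edge sets of two Hamiltonian cycles H1 and H2 of L(G). Let M be the set of edges e of G such that for some endpoint u of e and some i ∈ {1,2}, both L(G)-edges joining e to the other two edges of G at u belong to Hi. Then M is a perfect matching of G, and the edges in E(G) \ M form a Hamiltonian cycle of G. -/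
open SimpleGraph

set_option linter.unusedSectionVars false
set_option maxHeartbeats 1000000

namespace KotzigAux

section Generic
variable {W : Type*}



lemma walk_closure {H : SimpleGraph W} {S : Set W} :
    ∀ {u v : W} (w : H.Walk u v),
      (∀ x y, s(x, y) ∈ w.edges → x ∈ S → y ∈ S) → u ∈ S → ∀ z ∈ w.support, z ∈ S := by
  intro u v w
  induction w with
  | nil =>
    intro _ hu z hz
    simp only [Walk.support_nil, List.mem_singleton] at hz
    exact hz ▸ hu
  | @cons u u' v h t ih =>
    intro hcl hu z hz
    rw [Walk.support_cons, List.mem_cons] at hz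
    rcases hz with rfl | hz
    · exact hu
    · exact ih (fun x y hxy => hcl x y (by simp [hxy]))
        (hcl _ _ (by simp) hu) z hz

lemma first_edge {H : SimpleGraph W} {u x y w : W} {h : H.Adj u y} {t : H.Walk y x}
    (hR : (Walk.cons h t).IsPath) (hw : s(u, w) ∈ (Walk.cons h t).edges) : w = y := by
  rw [Walk.edges_cons, List.mem_cons] at hw
  rcases hw with hw | hw
  · rcases Sym2.eq_iff.mp hw with ⟨-, rfl⟩ | ⟨h1, rfl⟩
    · rfl
    · exact h1
  · exact absurd (t.fst_mem_support_of_mem_edges hw) ((Walk.cons_isPath_iff h t).mp hR).2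


lemma cycle_edges_at_start {H : SimpleGraph W} {x : W} {d : H.Walk x x} (hd : d.IsCycle) :
    ∃ y z : W, y ≠ z ∧ ∀ w, (s(x, w) ∈ d.edges ↔ w = y ∨ w = z) := by
  cases d with
  | nil => exact absurd hd Walk.IsCycle.not_of_nil
  | @cons _ y _ h t =>
    have hct := (Walk.cons_isCycle_iff t h).mp hd
    obtain ⟨z, h', t', htr⟩ : ∃ (z : W) (h' : H.Adj x z) (t' : H.Walk z y),
        t.reverse = Walk.cons h' t' := by
      cases hrev : t.reverse with
      | nil => exact absurd h (H.loopless.irrefl x)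
      | cons h'' t'' => exact ⟨_, h'', t'', rfl⟩
    have hz_t : s(x, z) ∈ t.edges := by
      have hmem : s(x, z) ∈ t.reverse.edges := by rw [htr]; simp
      rwa [Walk.edges_reverse, List.mem_reverse] at hmem
    have hyz : y ≠ z := by rintro rfl; exact hct.2 hz_t
    refine ⟨y, z, hyz, fun w => ?_⟩
    rw [Walk.edges_cons, List.mem_cons]
    constructor
    · rintro (hw | hw)
      · exact Or.inl (Sym2.congr_right.mp hw)
      · right
        have hw' : s(x, w) ∈ t.reverse.edges := by rwa [Walk.edges_reverse, List.mem_reverse]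
        rw [htr, Walk.edges_cons, List.mem_cons] at hw'
        rcases hw' with hw' | hw'
        · exact Sym2.congr_right.mp hw'
        · refine absurd (t'.fst_mem_support_of_mem_edges hw') ?_
          have hrp : t.reverse.IsPath := hct.1.reverse
          rw [htr] at hrp
          exact ((Walk.cons_isPath_iff h' t').mp hrp).2
    · rintro (rfl | rfl)
      · exact Or.inl rfl
      · exact Or.inr hz_t

lemma cycle_edges_at [DecidableEq W] {H : SimpleGraph W} {v x : W} {c : H.Walk v v} (hc : c.IsCycle)
    (hx : x ∈ c.support) :
    ∃ y z : W, y ≠ z ∧ ∀ w, (s(x, w) ∈ c.edges ↔ w = y ∨ w = z) := by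
  obtain ⟨y, z, hyz, hch⟩ := cycle_edges_at_start (hc.rotate hx)
  refine ⟨y, z, hyz, fun w => ?_⟩
  rw [← hch w, List.IsRotated.mem_iff (c.rotate_edges _ hx)]


lemma two_partners [DecidableEq W] {H : SimpleGraph W} {a : W} {c : H.Walk a a}
    (hc : c.IsHamiltonianCycle) {e f g : W} (hfg : f ≠ g)
    (hef : s(e, f) ∈ c.edges) (heg : s(e, g) ∈ c.edges) :
    ∀ h, s(e, h) ∈ c.edges → h = f ∨ h = g := by
  obtain ⟨y, z, hyz, hch⟩ := cycle_edges_at hc.isCycle (hc.mem_support e)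
  have h1 := (hch f).mp hef
  have h2 := (hch g).mp heg
  intro h hh
  have h3 := (hch h).mp hh
  rcases h1 with rfl | rfl <;> rcases h2 with rfl | rfl <;> tauto

lemma mem_support_rotate [DecidableEq W] {H : SimpleGraph W} {v u : W} {c : H.Walk v v}
    (hc : c.IsHamiltonianCycle) (h : u ∈ c.support) (x : W) : x ∈ (c.rotate _ h).support := by
  have h1 : x ∈ c.support.tail := by
    have h2 := hc.isHamiltonian_tail.mem_support x
    rwa [Walk.support_tail_of_not_nil c hc.isCycle.not_nil] at h2
  exact List.mem_of_mem_tail ((List.IsRotated.mem_iff (Walk.support_rotate c _ h)).mpr h1)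

lemma no_triangle [DecidableEq W] {H : SimpleGraph W} {a : W} {c : H.Walk a a}
    (hc : c.IsHamiltonianCycle) {x y z w : W} (hxy : x ≠ y) (hxz : x ≠ z) (hyz : y ≠ z)
    (exy : s(x, y) ∈ c.edges) (exz : s(x, z) ∈ c.edges) (eyz : s(y, z) ∈ c.edges)
    (hwx : w ≠ x) (hwy : w ≠ y) (hwz : w ≠ z) : False := by
  have hx : x ∈ c.support := hc.mem_support x
  have hcl : ∀ x' y', s(x', y') ∈ (c.rotate _ hx).edges → x' ∈ ({x, y, z} : Set W) →
      y' ∈ ({x, y, z} : Set W) := by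
    intro x' y' he hx'
    rw [List.IsRotated.mem_iff (c.rotate_edges _ hx)] at he
    simp only [Set.mem_insert_iff, Set.mem_singleton_iff] at hx' ⊢
    rcases hx' with rfl | rfl | rfl
    · rcases two_partners hc hyz exy exz y' he with rfl | rfl
      · exact Or.inr (Or.inl rfl)
      · exact Or.inr (Or.inr rfl)
    · rcases two_partners hc hxz (Sym2.eq_swap ▸ exy) eyz y' he with rfl | rfl
      · exact Or.inl rfl
      · exact Or.inr (Or.inr rfl)
    · rcases two_partners hc hxy (Sym2.eq_swap ▸ exz) (Sym2.eq_swap ▸ eyz) y' he with rfl | rfl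
      · exact Or.inl rfl
      · exact Or.inr (Or.inl rfl)
  have hw := walk_closure (c.rotate _ hx) hcl (Or.inl rfl) w (mem_support_rotate hc hx w)
  simp only [Set.mem_insert_iff, Set.mem_singleton_iff] at hw
  tauto

lemma hamCycle_of_full_support [DecidableEq W] {H : SimpleGraph W} {v : W}
    {c : H.Walk v v} (hc : c.IsCycle) (hs : ∀ x, x ∈ c.support) : c.IsHamiltonianCycle := by
  refine ⟨hc, fun x => ?_⟩
  rw [Walk.support_tail_of_not_nil c hc.not_nil]
  refine List.count_eq_one_of_mem hc.support_nodup ?_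
  cases c with
  | nil => exact absurd hc Walk.IsCycle.not_of_nil
  | cons h t =>
    simp only [Walk.support_cons, List.tail_cons]
    by_cases hx : x = v
    · exact hx ▸ t.end_mem_support
    · have h2 := hs x
      rw [Walk.support_cons, List.mem_cons] at h2
      exact h2.resolve_left hx


lemma exists_hamiltonian_cycle {W : Type*} [Fintype W] [DecidableEq W] [Nonempty W]
    {H : SimpleGraph W}
    (hdeg : ∀ v : W, ∃ y z, y ≠ z ∧ ∀ w, (H.Adj v w ↔ w = y ∨ w = z))
    (hcl : ∀ S : Set W, S.Nonempty → (∀ x ∈ S, ∀ y, H.Adj x y → y ∈ S) → ∀ v, v ∈ S) :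
    ∃ (v : W) (c : H.Walk v v), c.IsHamiltonianCycle ∧ ∀ e, (e ∈ c.edges ↔ e ∈ H.edgeSet) := by
  classical
  have hbdd : BddAbove {n | ∃ (u v : W) (P : H.Walk u v), P.IsPath ∧ P.length = n} := by
    refine ⟨Fintype.card W, ?_⟩
    rintro n ⟨u, v, P, hP, rfl⟩
    exact hP.length_lt.le
  have hne : {n | ∃ (u v : W) (P : H.Walk u v), P.IsPath ∧ P.length = n}.Nonempty := by
    obtain ⟨w⟩ := ‹Nonempty W›
    exact ⟨0, w, w, Walk.nil, Walk.IsPath.nil, rfl⟩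
  obtain ⟨u, v, P, hP, hPlen⟩ := Nat.sSup_mem hne hbdd
  have hmax : ∀ (x y' : W) (Q : H.Walk x y'), Q.IsPath → Q.length ≤ P.length := by
    intro x y' Q hQ
    rw [hPlen]
    exact le_csSup hbdd ⟨x, y', Q, hQ, rfl⟩
  have hnbr : ∀ w, H.Adj u w → w ∈ P.support := by
    intro w hw
    by_contra hws
    have hpath : (Walk.cons hw.symm P).IsPath := (Walk.cons_isPath_iff _ _).mpr ⟨hP, hws⟩
    have hle := hmax _ _ _ hpath
    simp [Walk.length_cons] at hle
  obtain ⟨y, z, hyz, hch⟩ := hdeg u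
  cases P with
  | nil =>
    exfalso
    have hadjy : H.Adj u y := (hch y).mpr (Or.inl rfl)
    have hpath : (Walk.cons hadjy.symm Walk.nil).IsPath := by
      rw [Walk.cons_isPath_iff]
      simp [hadjy.ne']
    have hle := hmax _ _ _ hpath
    simp at hle
  | @cons _ s₀ _ hadj t =>
    have hs₀y : s₀ = y ∨ s₀ = z := (hch s₀).mp hadj
    set w : W := if y = s₀ then z else y with hwdef
    have hwyz : w = y ∨ w = z := by
      rw [hwdef]; split <;> simp
    have hadjw : H.Adj u w := (hch w).mpr hwyz
    have hwne : w ≠ s₀ := by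
      rw [hwdef]; split
      · rename_i hy; exact fun hzs => hyz (hy.trans hzs.symm)
      · rename_i hy; exact fun hys => hy hys
    have hwsup : w ∈ (Walk.cons hadj t).support := hnbr w hadjw
    set Q := (Walk.cons hadj t).takeUntil w hwsup with hQdef
    have hQpath : Q.IsPath := hP.takeUntil hwsup
    have hedge : s(u, w) ∉ Q.reverse.edges := by
      rw [Walk.edges_reverse, List.mem_reverse]
      intro hmem
      exact hwne (first_edge hP ((Walk.cons hadj t).edges_takeUntil_subset hwsup hmem))
    have hcyc : (Walk.cons hadjw Q.reverse).IsCycle :=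
      (Walk.cons_isCycle_iff Q.reverse hadjw).mpr ⟨hQpath.reverse, hedge⟩
    set c := Walk.cons hadjw Q.reverse with hcdef
    have key : ∀ x y0, x ∈ c.support → H.Adj x y0 → s(x, y0) ∈ c.edges := by
      intro x y0 hx hadj0
      obtain ⟨y', z', hyz', hch'⟩ := cycle_edges_at hcyc hx
      have hay' : H.Adj x y' := (c.edges_subset_edgeSet ((hch' y').mpr (Or.inl rfl)))
      have haz' : H.Adj x z' := (c.edges_subset_edgeSet ((hch' z').mpr (Or.inr rfl)))
      obtain ⟨yx, zx, hyzx, hchx⟩ := hdeg x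
      have h1 := (hchx y').mp hay'
      have h2 := (hchx z').mp haz'
      have h3 := (hchx y0).mp hadj0
      refine (hch' y0).mpr ?_
      rcases h1 with rfl | rfl <;> rcases h2 with rfl | rfl <;> tauto
    have hfull : ∀ x, x ∈ c.support := by
      refine hcl {x | x ∈ c.support} ⟨u, c.start_mem_support⟩ ?_
      intro x hx y0 hadj0
      exact c.snd_mem_support_of_mem_edges (key x y0 hx hadj0)
    refine ⟨u, c, hamCycle_of_full_support hcyc hfull, fun e => ?_⟩
    constructor
    · exact fun he => c.edges_subset_edgeSet he
    · intro he
      induction e with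
      | h x y0 => exact key x y0 (hfull x) he

end Generic

section Graph
variable {V : Type*} [Fintype V] [DecidableEq V] {G : SimpleGraph V} [DecidableRel G.Adj]


lemma coe_eq_pair {e : G.edgeSet} {u w : V} (hu : u ∈ (e : Sym2 V)) (hw : w ∈ (e : Sym2 V))
    (huw : u ≠ w) : (e : Sym2 V) = s(u, w) :=
  (Sym2.mem_and_mem_iff huw).mp ⟨hu, hw⟩

lemma share_eq {e f : G.edgeSet} {u w : V} (hef : e ≠ f) (hu : u ∈ (e : Sym2 V))
    (hu' : u ∈ (f : Sym2 V)) (hw : w ∈ (e : Sym2 V)) (hw' : w ∈ (f : Sym2 V)) : w = u := by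
  by_contra hne
  exact hef (Subtype.ext ((coe_eq_pair hw hu hne).trans (coe_eq_pair hw' hu' hne).symm))

lemma endpoints {e : G.edgeSet} {u : V} (hu : u ∈ (e : Sym2 V)) :
    ∃ v, v ≠ u ∧ v ∈ (e : Sym2 V) ∧ (e : Sym2 V) = s(u, v) := by
  obtain ⟨v, hv⟩ := Sym2.mem_iff_exists.mp hu
  have hadj : G.Adj u v := G.mem_edgeSet.mp (hv ▸ e.2)
  exact ⟨v, hadj.ne', by rw [hv]; exact Sym2.mem_mk_right _ _, hv⟩

lemma edges_at (hreg : G.IsRegularOfDegree 3) (u : V) :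
    ∃ e1 e2 e3 : G.edgeSet, e1 ≠ e2 ∧ e1 ≠ e3 ∧ e2 ≠ e3 ∧
      u ∈ (e1 : Sym2 V) ∧ u ∈ (e2 : Sym2 V) ∧ u ∈ (e3 : Sym2 V) ∧
      ∀ f : G.edgeSet, u ∈ (f : Sym2 V) → f = e1 ∨ f = e2 ∨ f = e3 := by
  obtain ⟨w1, w2, w3, h12, h13, h23, hset⟩ := Finset.card_eq_three.mp (hreg u)
  have hadj : ∀ w, w ∈ G.neighborFinset u ↔ G.Adj u w := fun w => G.mem_neighborFinset u w
  have ha1 : G.Adj u w1 := (hadj w1).mp (by rw [hset]; simp)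
  have ha2 : G.Adj u w2 := (hadj w2).mp (by rw [hset]; simp)
  have ha3 : G.Adj u w3 := (hadj w3).mp (by rw [hset]; simp)
  refine ⟨⟨s(u, w1), ha1⟩, ⟨s(u, w2), ha2⟩, ⟨s(u, w3), ha3⟩,
    fun h => h12 (Sym2.congr_right.mp (congrArg Subtype.val h)),
    fun h => h13 (Sym2.congr_right.mp (congrArg Subtype.val h)),
    fun h => h23 (Sym2.congr_right.mp (congrArg Subtype.val h)),
    Sym2.mem_mk_left _ _, Sym2.mem_mk_left _ _, Sym2.mem_mk_left _ _, ?_⟩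
  intro f hf
  obtain ⟨v, hvne, hv, hfv⟩ := endpoints hf
  have : v ∈ G.neighborFinset u := (hadj v).mpr (G.mem_edgeSet.mp (hfv ▸ f.2))
  rw [hset] at this
  simp only [Finset.mem_insert, Finset.mem_singleton] at this
  rcases this with rfl | rfl | rfl
  · exact Or.inl (Subtype.ext hfv)
  · exact Or.inr (Or.inl (Subtype.ext hfv))
  · exact Or.inr (Or.inr (Subtype.ext hfv))

lemma others (hreg : G.IsRegularOfDegree 3) {u : V} {e : G.edgeSet} (he : u ∈ (e : Sym2 V)) :
    ∃ f g : G.edgeSet, f ≠ g ∧ f ≠ e ∧ g ≠ e ∧ u ∈ (f : Sym2 V) ∧ u ∈ (g : Sym2 V) ∧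
      ∀ h : G.edgeSet, u ∈ (h : Sym2 V) → h = e ∨ h = f ∨ h = g := by
  obtain ⟨e1, e2, e3, h12, h13, h23, m1, m2, m3, hall⟩ := edges_at hreg u
  rcases hall e he with rfl | rfl | rfl
  · exact ⟨e2, e3, h23, h12.symm, h13.symm, m2, m3, fun h hh => hall h hh⟩
  · exact ⟨e1, e3, h13, h12, h23.symm, m1, m3, fun h hh => by rcases hall h hh with h'|h'|h' <;> tauto⟩
  · exact ⟨e1, e2, h12, h13, h23, m1, m2, fun h hh => by rcases hall h hh with h'|h'|h' <;> tauto⟩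

lemma fourth (hreg : G.IsRegularOfDegree 3) (u : V) :
    ∃ e' : G.edgeSet, u ∉ (e' : Sym2 V) := by
  have h1 : (G.neighborFinset u).card = 3 := hreg u
  obtain ⟨w1, hw1⟩ : ∃ w, w ∈ G.neighborFinset u := Finset.card_pos.mp (by omega)
  have ha1 : G.Adj u w1 := (G.mem_neighborFinset u w1).mp hw1
  have h2 : 1 < (G.neighborFinset w1).card := by have := hreg w1; rw [degree] at this; omega
  obtain ⟨x, hx, hxu⟩ := Finset.exists_mem_ne h2 u
  have hax : G.Adj w1 x := (G.mem_neighborFinset w1 x).mp hx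
  refine ⟨⟨s(w1, x), hax⟩, ?_⟩
  simp only [Sym2.mem_iff]
  push_neg
  exact ⟨ha1.ne, fun h => hxu h.symm⟩


structure HamPair (G : SimpleGraph V) [DecidableRel G.Adj] where
  a : G.edgeSet
  b : G.edgeSet
  c1 : (G.lineGraph).Walk a a
  c2 : (G.lineGraph).Walk b b
  h1 : c1.IsHamiltonianCycle
  h2 : c2.IsHamiltonianCycle
  hdisj : ∀ x, x ∈ c1.edges → x ∈ c2.edges → False
  hcov : ∀ e f : G.edgeSet, (G.lineGraph).Adj e f → s(e, f) ∈ c1.edges ∨ s(e, f) ∈ c2.edges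

def HamPair.swap (C : HamPair G) : HamPair G :=
  ⟨C.b, C.a, C.c2, C.c1, C.h2, C.h1, fun x h2 h1 => C.hdisj x h1 h2,
    fun e f h => (C.hcov e f h).symm⟩

def HamPair.Ro (C : HamPair G) (u : V) (e : G.edgeSet) : Prop :=
  ∀ f : G.edgeSet, f ≠ e → u ∈ (f : Sym2 V) → s(e, f) ∈ C.c1.edges

def HamPair.Re (C : HamPair G) (u : V) (e : G.edgeSet) : Prop :=
  u ∈ (e : Sym2 V) ∧ (C.Ro u e ∨ C.swap.Ro u e)

lemma HamPair.swap_swap_Ro (C : HamPair G) (u : V) (e : G.edgeSet) :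
    C.swap.swap.Ro u e ↔ C.Ro u e := Iff.rfl

lemma HamPair.Re_swap (C : HamPair G) (u : V) (e : G.edgeSet) :
    C.swap.Re u e ↔ C.Re u e := by
  unfold HamPair.Re
  rw [C.swap_swap_Ro]
  exact and_congr_right fun _ => or_comm

lemma HamPair.adj_of_shared (C : HamPair G) {e f : G.edgeSet} {u : V} (hne : f ≠ e)
    (hu : u ∈ (e : Sym2 V)) (hu' : u ∈ (f : Sym2 V)) : (G.lineGraph).Adj e f :=
  lineGraph_adj_iff_exists.mpr ⟨hne.symm, u, hu, hu'⟩

lemma HamPair.noTri (C : HamPair G) (hreg : G.IsRegularOfDegree 3) {u : V} {e f g : G.edgeSet}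
    (hef : e ≠ f) (heg : e ≠ g) (hfg : f ≠ g)
    (hue : u ∈ (e : Sym2 V)) (huf : u ∈ (f : Sym2 V)) (hug : u ∈ (g : Sym2 V))
    (h1 : s(e, f) ∈ C.c1.edges) (h2 : s(e, g) ∈ C.c1.edges) (h3 : s(f, g) ∈ C.c1.edges) :
    False := by
  obtain ⟨e', he'⟩ := fourth hreg u
  exact no_triangle C.h1 (w := e') hef heg hfg h1 h2 h3 (fun h => he' (by rw [h]; exact hue))
    (fun h => he' (by rw [h]; exact huf)) (fun h => he' (by rw [h]; exact hug))

lemma HamPair.attach (C : HamPair G) (hreg : G.IsRegularOfDegree 3) {u : V} {e f : G.edgeSet}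
    (hu : u ∈ (e : Sym2 V)) (hRo : C.Ro u e) (hf : s(e, f) ∈ C.c1.edges) :
    u ∈ (f : Sym2 V) := by
  obtain ⟨f0, g0, hfg0, hf0e, hg0e, huf0, hug0, -⟩ := others hreg hu
  rcases two_partners C.h1 hfg0 (hRo f0 hf0e huf0) (hRo g0 hg0e hug0) f hf with rfl | rfl
  · exact huf0
  · exact hug0

lemma HamPair.other_end (C : HamPair G) (hreg : G.IsRegularOfDegree 3) {u v : V}
    {e : G.edgeSet} (hu : u ∈ (e : Sym2 V)) (hv : v ∈ (e : Sym2 V)) (huv : u ≠ v)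
    (hRo : C.Ro u e) : C.swap.Ro v e := by
  intro f' hf'e hvf'
  have hnp : s(e, f') ∉ C.c1.edges := by
    intro hmem
    have huf' := C.attach hreg hu hRo hmem
    exact hf'e (Subtype.ext ((coe_eq_pair huf' hvf' huv).trans (coe_eq_pair hu hv huv).symm))
  rcases C.hcov e f' (C.adj_of_shared hf'e hv hvf') with h | h
  · exact absurd h hnp
  · exact h

lemma HamPair.Ro_endpoint (C : HamPair G) (hreg : G.IsRegularOfDegree 3) {u : V}
    {e : G.edgeSet} (hRe : C.Re u e) : ∃ x, x ∈ (e : Sym2 V) ∧ C.Ro x e := by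
  obtain ⟨hu, hRo | hRo⟩ := hRe
  · exact ⟨u, hu, hRo⟩
  · obtain ⟨v, hvu, hv, -⟩ := endpoints hu
    exact ⟨v, hv, (C.swap.other_end hreg hu hv (fun h => hvu h.symm) hRo)⟩

lemma HamPair.Re_any (C : HamPair G) (hreg : G.IsRegularOfDegree 3) {u u0 : V}
    {e : G.edgeSet} (hRe : C.Re u0 e) (hu : u ∈ (e : Sym2 V)) : C.Re u e := by
  obtain ⟨x, hx, hRo⟩ := C.Ro_endpoint hreg hRe
  by_cases hxu : x = u
  · exact ⟨hu, Or.inl (hxu ▸ hRo)⟩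
  · exact ⟨hu, Or.inr (C.other_end hreg hx hu hxu hRo)⟩

lemma HamPair.tri_branch (C : HamPair G) {u : V} {x y z : G.edgeSet}
    (hxy : x ≠ y) (hxz : x ≠ z) (hyz : y ≠ z)
    (hux : u ∈ (x : Sym2 V)) (huy : u ∈ (y : Sym2 V)) (huz : u ∈ (z : Sym2 V))
    (hall : ∀ h : G.edgeSet, u ∈ (h : Sym2 V) → h = x ∨ h = y ∨ h = z)
    (h1 : s(x, y) ∈ C.c1.edges) (h2 : s(x, z) ∈ C.c1.edges) (h3 : s(y, z) ∈ C.c2.edges) :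
    ∃! e, C.Re u e := by
  refine ⟨x, ⟨hux, Or.inl fun f hfx huf => ?_⟩, ?_⟩
  · rcases hall f huf with rfl | rfl | rfl
    · exact absurd rfl hfx
    · exact h1
    · exact h2
  · rintro e ⟨hue, hRo | hRo⟩
    · rcases hall e hue with h' | h' | h'
      · exact h'
      · subst h'
        exact absurd (hRo z (Ne.symm hyz) huz) (fun h => C.hdisj _ h h3)
      · subst h'
        exact absurd (hRo y hyz huy) (fun h => C.hdisj _ h (Sym2.eq_swap ▸ h3))
    · rcases hall e hue with h' | h' | h'
      · exact h'
      · subst h'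
        exact absurd (hRo x hxy hux) (fun h => C.hdisj _ (Sym2.eq_swap ▸ h1) h)
      · subst h'
        exact absurd (hRo x hxz hux) (fun h => C.hdisj _ (Sym2.eq_swap ▸ h2) h)

lemma exu_iff {α : Sort*} {P Q : α → Prop} (h : ∀ x, P x ↔ Q x) (he : ∃! x, P x) :
    ∃! x, Q x := by
  obtain ⟨x, hx, hux⟩ := he
  exact ⟨x, (h x).mp hx, fun y hy => hux y ((h y).mpr hy)⟩

lemma HamPair.tri (C : HamPair G) (hreg : G.IsRegularOfDegree 3) (u : V) :
    ∃! e, C.Re u e := by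
  obtain ⟨e1, e2, e3, h12, h13, h23, m1, m2, m3, hall⟩ := edges_at hreg u
  have a12 := C.adj_of_shared h12.symm m1 m2
  have a13 := C.adj_of_shared h13.symm m1 m3
  have a23 := C.adj_of_shared h23.symm m2 m3
  rcases C.hcov e1 e2 a12 with p12 | p12 <;> rcases C.hcov e1 e3 a13 with p13 | p13 <;>
    rcases C.hcov e2 e3 a23 with p23 | p23
  · exact absurd p23 (fun h => C.noTri hreg h12 h13 h23 m1 m2 m3 p12 p13 h)
  · exact C.tri_branch h12 h13 h23 m1 m2 m3 hall p12 p13 p23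
  · exact C.tri_branch (Ne.symm h12) h23 h13 m2 m1 m3
      (fun h hh => by rcases hall h hh with h'|h'|h' <;> tauto)
      (Sym2.eq_swap ▸ p12) p23 p13
  · exact exu_iff (fun e => C.Re_swap u e) (C.swap.tri_branch (Ne.symm h13) (Ne.symm h23) h12
      m3 m1 m2 (fun h hh => by rcases hall h hh with h'|h'|h' <;> tauto)
      (Sym2.eq_swap ▸ p13) (Sym2.eq_swap ▸ p23) p12)
  · exact C.tri_branch (Ne.symm h13) (Ne.symm h23) h12 m3 m1 m2
      (fun h hh => by rcases hall h hh with h'|h'|h' <;> tauto)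
      (Sym2.eq_swap ▸ p13) (Sym2.eq_swap ▸ p23) p12
  · exact exu_iff (fun e => C.Re_swap u e) (C.swap.tri_branch (Ne.symm h12) h23 h13
      m2 m1 m3 (fun h hh => by rcases hall h hh with h'|h'|h' <;> tauto)
      (Sym2.eq_swap ▸ p12) p23 p13)
  · exact exu_iff (fun e => C.Re_swap u e)
      (C.swap.tri_branch h12 h13 h23 m1 m2 m3 hall p12 p13 p23)
  · exact absurd p23 (fun h => C.swap.noTri hreg h12 h13 h23 m1 m2 m3 p12 p13 h)

end Graph
end KotzigAux

open KotzigAux in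
theorem reentrant_edges_perfect_matching {V : Type*} [Fintype V] [DecidableEq V]
    (G : SimpleGraph V) [DecidableRel G.Adj]
    (hreg : G.IsRegularOfDegree 3)
    {a b : G.edgeSet}
    (p : (G.lineGraph).Walk a a) (q : (G.lineGraph).Walk b b)
    (hp : p.IsHamiltonianCycle) (hq : q.IsHamiltonianCycle)
    (hdisj : Disjoint {x | x ∈ p.edges} {x | x ∈ q.edges})
    (hunion : {x | x ∈ p.edges} ∪ {x | x ∈ q.edges} = (G.lineGraph).edgeSet)
    (M : Set (Sym2 V))
    (hM : M = {x | ∃ hx : x ∈ G.edgeSet, ∃ u ∈ x,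
      (∀ f : G.edgeSet, f ≠ ⟨x, hx⟩ → u ∈ (f : Sym2 V) →
        s((⟨x, hx⟩ : G.edgeSet), f) ∈ p.edges) ∨
      (∀ f : G.edgeSet, f ≠ ⟨x, hx⟩ → u ∈ (f : Sym2 V) →
        s((⟨x, hx⟩ : G.edgeSet), f) ∈ q.edges)}) :
    (∀ v : V, ∃! w : V, G.Adj v w ∧ s(v, w) ∈ M) ∧
    ∃ (c0 : V) (c : G.Walk c0 c0), c.IsHamiltonianCycle ∧
      {x | x ∈ c.edges} = G.edgeSet \ M := by
  classical
  have hdisj' : ∀ x, x ∈ p.edges → x ∈ q.edges → False := by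
    intro x h1 h2
    exact Set.disjoint_left.mp hdisj h1 h2
  have hcov : ∀ e f : G.edgeSet, (G.lineGraph).Adj e f →
      s(e, f) ∈ p.edges ∨ s(e, f) ∈ q.edges := by
    intro e f h
    have hm : s(e, f) ∈ (G.lineGraph).edgeSet := (G.lineGraph).mem_edgeSet.mpr h
    rw [← hunion] at hm
    exact hm
  let C : HamPair G := ⟨a, b, p, q, hp, hq, hdisj', hcov⟩
  have hMiff : ∀ e : G.edgeSet, ((e : Sym2 V) ∈ M ↔ ∃ u, C.Re u e) := by
    intro e
    rw [hM]
    simp only [Set.mem_setOf_eq]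
    constructor
    · rintro ⟨hx, u, hu, hd⟩
      exact ⟨u, hu, hd⟩
    · rintro ⟨u, hu, hd⟩
      exact ⟨e.2, u, hu, hd⟩
  -- Part 1
  have part1 : ∀ v : V, ∃! w : V, G.Adj v w ∧ s(v, w) ∈ M := by
    intro v
    obtain ⟨e, hRe, huniq⟩ := C.tri hreg v
    obtain ⟨w, hwv, hw, hew⟩ := endpoints hRe.1
    refine ⟨w, ⟨G.mem_edgeSet.mp (hew ▸ e.2), by rw [← hew]; exact (hMiff e).mpr ⟨v, hRe⟩⟩, ?_⟩
    rintro w' ⟨hadj', hM'⟩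
    have hM'' : ((⟨s(v, w'), hadj'⟩ : G.edgeSet) : Sym2 V) ∈ M := hM'
    obtain ⟨u0, hRe0⟩ := (hMiff ⟨s(v, w'), hadj'⟩).mp hM''
    have hve' : v ∈ ((⟨s(v, w'), hadj'⟩ : G.edgeSet) : Sym2 V) := Sym2.mem_mk_left _ _
    have heq := huniq _ (C.Re_any hreg hRe0 hve')
    have hcoe : s(v, w') = s(v, w) := by
      rw [← hew, ← heq]
    exact Sym2.congr_right.mp hcoe
  -- Part 2 setup
  have nonM_pair : ∀ u : V, ∃ f g : G.edgeSet, f ≠ g ∧ u ∈ (f : Sym2 V) ∧ u ∈ (g : Sym2 V) ∧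
      (f : Sym2 V) ∉ M ∧ (g : Sym2 V) ∉ M ∧
      ∀ h : G.edgeSet, u ∈ (h : Sym2 V) → (h : Sym2 V) ∉ M → (h = f ∨ h = g) := by
    intro u
    obtain ⟨e0, hRe0, huniq⟩ := C.tri hreg u
    obtain ⟨f, g, hfg, hfe, hge, huf, hug, hall⟩ := others hreg hRe0.1
    have hnotM : ∀ h : G.edgeSet, u ∈ (h : Sym2 V) → h ≠ e0 → (h : Sym2 V) ∉ M := by
      intro h hu hne hMh
      obtain ⟨u1, hRe1⟩ := (hMiff h).mp hMh
      exact hne (huniq h (C.Re_any hreg hRe1 hu))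
    refine ⟨f, g, hfg, huf, hug, hnotM f huf hfe, hnotM g hug hge, ?_⟩
    intro h hu hMh
    rcases hall h hu with h' | h' | h'
    · exact absurd (h' ▸ (hMiff e0).mpr ⟨u, hRe0⟩) hMh
    · exact Or.inl h'
    · exact Or.inr h'
  set H : SimpleGraph V := G.deleteEdges M with hHdef
  have hHadj : ∀ x y : V, H.Adj x y ↔ G.Adj x y ∧ s(x, y) ∉ M := fun x y =>
    SimpleGraph.deleteEdges_adj
  obtain ⟨⟨u0, w0⟩, -⟩ := Quot.exists_rep (a : Sym2 V)
  have : Nonempty V := ⟨u0⟩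
  have hdeg : ∀ v : V, ∃ y z, y ≠ z ∧ ∀ w, (H.Adj v w ↔ w = y ∨ w = z) := by
    intro v
    obtain ⟨f, g, hfg, hvf, hvg, hfM, hgM, hallv⟩ := nonM_pair v
    obtain ⟨y, hyv, hyf, hfy⟩ := endpoints hvf
    obtain ⟨z, hzv, hzg, hgz⟩ := endpoints hvg
    have hyz : y ≠ z := by
      rintro rfl
      exact hfg (Subtype.ext (hfy.trans hgz.symm))
    refine ⟨y, z, hyz, fun w => ?_⟩
    constructor
    · intro hw
      rw [hHadj] at hw
      have hvew : v ∈ ((⟨s(v, w), hw.1⟩ : G.edgeSet) : Sym2 V) := Sym2.mem_mk_left _ _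
      rcases hallv ⟨s(v, w), hw.1⟩ hvew hw.2 with h' | h'
      · left
        have : s(v, w) = s(v, y) := by
          rw [show s(v, w) = ((⟨s(v, w), hw.1⟩ : G.edgeSet) : Sym2 V) from rfl, h', hfy]
        exact Sym2.congr_right.mp this
      · right
        have : s(v, w) = s(v, z) := by
          rw [show s(v, w) = ((⟨s(v, w), hw.1⟩ : G.edgeSet) : Sym2 V) from rfl, h', hgz]
        exact Sym2.congr_right.mp this
    · rintro (rfl | rfl)
      · rw [hHadj]
        exact ⟨G.mem_edgeSet.mp (hfy ▸ f.2), by rw [← hfy]; exact hfM⟩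
      · rw [hHadj]
        exact ⟨G.mem_edgeSet.mp (hgz ▸ g.2), by rw [← hgz]; exact hgM⟩
  have hclosed : ∀ S : Set V, S.Nonempty → (∀ x ∈ S, ∀ y, H.Adj x y → y ∈ S) → ∀ v, v ∈ S := by
    intro S hSne hScl v
    obtain ⟨s0, hs0⟩ := hSne
    have hstep : ∀ (x : V) (h : G.edgeSet), x ∈ S → x ∈ (h : Sym2 V) → (h : Sym2 V) ∉ M →
        ∀ y ∈ (h : Sym2 V), y ∈ S := by
      intro x h hxS hxh hhM y hyh
      by_cases hxy : y = x
      · exact hxy ▸ hxS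
      · refine hScl x hxS y ?_
        rw [hHadj]
        constructor
        · exact G.mem_edgeSet.mp ((coe_eq_pair hxh hyh (Ne.symm hxy)) ▸ h.2)
        · rw [← coe_eq_pair hxh hyh (Ne.symm hxy)]
          exact hhM
    have hRoM : ∀ e : G.edgeSet, (e : Sym2 V) ∈ M → ∃ x, x ∈ (e : Sym2 V) ∧ C.Ro x e := by
      intro e heM
      obtain ⟨u1, hRe1⟩ := (hMiff e).mp heM
      exact C.Ro_endpoint hreg hRe1
    have hTcl : ∀ x y : G.edgeSet, s(x, y) ∈ p.edges →
        x ∈ {e : G.edgeSet | ∃ u, u ∈ (e : Sym2 V) ∧ u ∈ S ∧ ((e : Sym2 V) ∈ M → C.Ro u e)} →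
        y ∈ {e : G.edgeSet | ∃ u, u ∈ (e : Sym2 V) ∧ u ∈ S ∧ ((e : Sym2 V) ∈ M → C.Ro u e)} := by
      intro x y hxy hxT
      obtain ⟨u, hux, huS, hM2Ro⟩ := hxT
      have hadjxy : (G.lineGraph).Adj x y :=
        (G.lineGraph).mem_edgeSet.mp (p.edges_subset_edgeSet hxy)
      have hxyne : x ≠ y := hadjxy.ne
      obtain ⟨w, hwx, hwy⟩ : ∃ w, w ∈ (x : Sym2 V) ∧ w ∈ (y : Sym2 V) := by
        obtain ⟨-, w, hw1, hw2⟩ := lineGraph_adj_iff_exists.mp hadjxy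
        exact ⟨w, hw1, hw2⟩
      have hwS : w ∈ S := by
        by_cases hxM : (x : Sym2 V) ∈ M
        · have hRo := hM2Ro hxM
          have huy : u ∈ (y : Sym2 V) := C.attach hreg hux hRo hxy
          exact (share_eq hxyne hux huy hwx hwy) ▸ huS
        · exact hstep u x huS hux hxM w hwx
      refine ⟨w, hwy, hwS, ?_⟩
      intro hyM
      obtain ⟨x1, hx1y, hRo1⟩ := hRoM y hyM
      have hx1x : x1 ∈ (x : Sym2 V) := C.attach hreg hx1y hRo1 (Sym2.eq_swap ▸ hxy)
      exact (share_eq hxyne hx1x hx1y hwx hwy) ▸ hRo1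
    obtain ⟨f0, g0, -, hs0f0, -, hf0M, -, -⟩ := nonM_pair s0
    have hsup : f0 ∈ p.support := hp.mem_support f0
    have hallT : ∀ e : G.edgeSet,
        e ∈ {e : G.edgeSet | ∃ u, u ∈ (e : Sym2 V) ∧ u ∈ S ∧ ((e : Sym2 V) ∈ M → C.Ro u e)} := by
      intro e
      have hf0T : f0 ∈ {e : G.edgeSet | ∃ u, u ∈ (e : Sym2 V) ∧ u ∈ S ∧
          ((e : Sym2 V) ∈ M → C.Ro u e)} := ⟨s0, hs0f0, hs0, fun h => absurd h hf0M⟩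
      refine walk_closure (p.rotate _ hsup) ?_ hf0T e (mem_support_rotate hp hsup e)
      intro x y hxy hxT
      exact hTcl x y ((List.IsRotated.mem_iff (p.rotate_edges _ hsup)).mp hxy) hxT
    obtain ⟨fv, gv, -, hvfv, -, hfvM, -, -⟩ := nonM_pair v
    obtain ⟨u', hu'fv, hu'S, -⟩ := hallT fv
    exact hstep u' fv hu'S hu'fv hfvM v hvfv
  obtain ⟨c0, c, hcham, hcedges⟩ := exists_hamiltonian_cycle hdeg hclosed
  have hle : H ≤ G := deleteEdges_le M
  refine ⟨part1, c0, c.map (Hom.ofLE hle),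
    hcham.map (f := Hom.ofLE hle) Function.bijective_id, ?_⟩
  have hfun : ∀ e : Sym2 V, Sym2.map (⇑(Hom.ofLE hle)) e = e := by
    intro e
    rw [show ⇑(Hom.ofLE hle) = id from rfl, Sym2.map_id]; rfl
  ext z
  simp only [Set.mem_setOf_eq, Walk.edges_map, List.mem_map]
  constructor
  · rintro ⟨e, he, rfl⟩
    rw [hfun e]
    have h2 := (hcedges e).mp he
    rwa [hHdef, edgeSet_deleteEdges] at h2
  · intro hz
    refine ⟨z, (hcedges z).mpr ?_, hfun z⟩
    rw [hHdef, edgeSet_deleteEdges]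
    exact hz
end

section
/- Let G be a (4,2)-biregular simple graph and suppose the edge set of L(G) is the disjoint union of the edge sets of two Hamiltonian cycles H1 and H2 of L(G). Then for every degree-4 vertex u of G, and for each i ∈ {1,2}, the edges of Hi joining two of the four edges of G incident to u form a Hamiltonian path of the 4-clique of L(G) spanned by those four edges; in particular, Hi uses exactly two of the L(G)-edges leaving that 4-clique. -/
open SimpleGraph

/-! ### Auxiliary lemmas -/

set_option maxRecDepth 20000 in
set_option synthInstance.maxHeartbeats 2000000 in
set_option synthInstance.maxSize 4000 in
set_option maxHeartbeats 1000000 in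
private lemma pathBool (b01 b02 b03 b12 b13 b23 o0 o1 o2 o3 : Bool)
    (h0 : b01.toNat + b02.toNat + b03.toNat + o0.toNat = 2)
    (h1 : b01.toNat + b12.toNat + b13.toNat + o1.toNat = 2)
    (h2 : b02.toNat + b12.toNat + b23.toNat + o2.toNat = 2)
    (h3 : b03.toNat + b13.toNat + b23.toNat + o3.toNat = 2)
    (he : o0 || o1 || o2 || o3)
    (hf : !o0 || !o1 || !o2 || !o3) :
    ∃ a b c d : Fin 4, a ≠ b ∧ a ≠ c ∧ a ≠ d ∧ b ≠ c ∧ b ≠ d ∧ c ≠ d ∧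
      (∀ m : Fin 4, m = a ∨ m = b ∨ m = c ∨ m = d) ∧
      (∀ i j : Fin 4,
        !![false, b01, b02, b03; b01, false, b12, b13; b02, b12, false, b23;
           b03, b13, b23, false] i j = true ↔
          s(i, j) = s(a, b) ∨ s(i, j) = s(b, c) ∨ s(i, j) = s(c, d)) ∧
      (∀ i : Fin 4, ![o0, o1, o2, o3] i = true ↔ i = a ∨ i = d) := by
  revert b01 b02 b03 b12 b13 b23 o0 o1 o2 o3
  simp only [Matrix.of_apply]
  decide

private lemma fin4_cover (i j k l m : Fin 4) (hij : i ≠ j) (hik : i ≠ k) (hil : i ≠ l)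
    (hjk : j ≠ k) (hjl : j ≠ l) (hkl : k ≠ l) : m = i ∨ m = j ∨ m = k ∨ m = l := by
  revert i j k l m; decide

private lemma count4 {α : Type*} [DecidableEq α] {n1 n2 n3 n4 c d : α}
    (h12 : n1 ≠ n2) (h13 : n1 ≠ n3) (h14 : n1 ≠ n4) (h23 : n2 ≠ n3) (h24 : n2 ≠ n4)
    (h34 : n3 ≠ n4) (hcd : c ≠ d)
    (hc : c = n1 ∨ c = n2 ∨ c = n3 ∨ c = n4) (hd : d = n1 ∨ d = n2 ∨ d = n3 ∨ d = n4)
    {P1 P2 P3 P4 : Prop} [Decidable P1] [Decidable P2] [Decidable P3] [Decidable P4]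
    (hp1 : P1 ↔ (n1 = c ∨ n1 = d)) (hp2 : P2 ↔ (n2 = c ∨ n2 = d))
    (hp3 : P3 ↔ (n3 = c ∨ n3 = d)) (hp4 : P4 ↔ (n4 = c ∨ n4 = d)) :
    (decide P1).toNat + (decide P2).toNat + (decide P3).toNat + (decide P4).toNat = 2 := by
  have e1 : decide P1 = decide (n1 = c ∨ n1 = d) := by rw [decide_eq_decide]; exact hp1
  have e2 : decide P2 = decide (n2 = c ∨ n2 = d) := by rw [decide_eq_decide]; exact hp2
  have e3 : decide P3 = decide (n3 = c ∨ n3 = d) := by rw [decide_eq_decide]; exact hp3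
  have e4 : decide P4 = decide (n4 = c ∨ n4 = d) := by rw [decide_eq_decide]; exact hp4
  rw [e1, e2, e3, e4]
  rcases hc with rfl | rfl | rfl | rfl <;> rcases hd with rfl | rfl | rfl | rfl <;>
    simp_all [h12.symm, h13.symm, h14.symm, h23.symm, h24.symm, h34.symm]

section WalkLemmas

variable {W : Type*} {H : SimpleGraph W}

private lemma end_edge_unique {c x : W} (q : H.Walk c x) (hq : q.IsPath) (hn : ¬ q.Nil) :
    ∃ d, s(d, x) ∈ q.edges ∧ ∀ z ∈ q.edges, x ∈ z → z = s(d, x) := by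
  induction q with
  | nil => simp at hn
  | @cons c b x h r ih =>
    by_cases hr : r.Nil
    · have hbx : b = x := hr.eq
      subst hbx
      have : r = Walk.nil := hr.eq_nil
      subst this
      exact ⟨c, by simp, by simp⟩
    · have hrpath : r.IsPath := hq.of_cons
      obtain ⟨d, hd1, hd2⟩ := ih hrpath hr
      refine ⟨d, by simp [hd1], ?_⟩
      intro z hz hxz
      rw [Walk.edges_cons, List.mem_cons] at hz
      rcases hz with rfl | hz
      · exfalso
        have hxc : x ≠ c := by
          intro hh; subst hh
          have := hq.support_nodup
          rw [Walk.support_cons] at this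
          exact (List.nodup_cons.mp this).1 (Walk.end_mem_support r)
        have hxb : x ≠ b := by
          intro hh; subst hh
          exact hr ((Walk.isPath_iff_eq_nil (p := r)).mp hrpath ▸ Walk.Nil.nil)
        rw [Sym2.mem_iff] at hxz
        tauto
      · exact hd2 z hz hxz

private lemma cycle_edges_at [DecidableEq W] {a : W} (p : H.Walk a a) (hp : p.IsCycle)
    (x : W) (hx : x ∈ p.support) :
    ∃ c d, c ≠ d ∧ s(x, c) ∈ p.edges ∧ s(x, d) ∈ p.edges ∧
      ∀ z ∈ p.edges, x ∈ z → z = s(x, c) ∨ z = s(x, d) := by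
  have hc' : (p.rotate x hx).IsCycle := hp.rotate hx
  have hmem : ∀ z, z ∈ (p.rotate x hx).edges ↔ z ∈ p.edges :=
    fun z => (p.rotate_edges x hx).perm.mem_iff
  obtain ⟨c, hadj, q, hq⟩ := (Walk.not_nil_iff).mp hc'.not_nil
  rw [hq, Walk.cons_isCycle_iff] at hc'
  obtain ⟨hqpath, hxe⟩ := hc'
  have hqn : ¬ q.Nil := fun h => hadj.ne h.eq.symm
  obtain ⟨d, hd1, hd2⟩ := end_edge_unique q hqpath hqn
  have hedges : (p.rotate x hx).edges = s(x, c) :: q.edges := by rw [hq, Walk.edges_cons]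
  refine ⟨c, d, ?_, ?_, ?_, ?_⟩
  · rintro rfl
    exact hxe (Sym2.eq_swap ▸ hd1)
  · rw [← hmem, hedges]; simp
  · rw [← hmem, hedges]; right; exact Sym2.eq_swap ▸ hd1
  · intro z hz hxz
    rw [← hmem, hedges, List.mem_cons] at hz
    rcases hz with rfl | hz
    · left; rfl
    · right; rw [hd2 z hz hxz]; exact Sym2.eq_swap

private lemma support_closed {P : Set W} {s t : W} (p : H.Walk s t) (hs : s ∈ P)
    (hstep : ∀ x y, s(x, y) ∈ p.edges → x ∈ P → y ∈ P) : ∀ x ∈ p.support, x ∈ P := by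
  induction p with
  | nil => intro x hx; rw [Walk.support_nil, List.mem_singleton] at hx; subst hx; exact hs
  | @cons s b t h r ih =>
    intro x hx
    rw [Walk.support_cons, List.mem_cons] at hx
    rcases hx with rfl | hx
    · exact hs
    · exact ih (hstep _ _ (by simp) hs)
        (fun x y hz hxP =>
          hstep x y (by rw [Walk.edges_cons]; exact List.mem_cons_of_mem _ hz) hxP) x hx

end WalkLemmas

set_option maxHeartbeats 1000000 in
private lemma halfK {V : Type*} [Fintype V] [DecidableEq V]
    (G : SimpleGraph V) [DecidableRel G.Adj]
    {a b : G.edgeSet} {u : V}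
    (e_ f_ : Fin 4 → G.edgeSet)
    (hinj : Function.Injective e_)
    (hS : ∀ i, u ∈ (e_ i : Sym2 V))
    (hsurj : ∀ x : G.edgeSet, u ∈ (x : Sym2 V) → ∃ i, e_ i = x)
    (hfu : ∀ i, u ∉ (f_ i : Sym2 V))
    (hnbr : ∀ i (x : G.edgeSet), (G.lineGraph).Adj (e_ i) x → u ∈ (x : Sym2 V) ∨ x = f_ i)
    (p : (G.lineGraph).Walk a a) (q : (G.lineGraph).Walk b b)
    (hp : p.IsHamiltonianCycle) (hq : q.IsHamiltonianCycle)
    (hdisj : Disjoint {x | x ∈ p.edges} {x | x ∈ q.edges}) :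
    (∃ (x y : G.edgeSet) (P : (G.lineGraph).Walk x y), x ≠ y ∧
      u ∈ (x : Sym2 V) ∧ u ∈ (y : Sym2 V) ∧ P.IsPath ∧
      {z | z ∈ P.support} = {e : G.edgeSet | u ∈ (e : Sym2 V)} ∧
      {z | z ∈ P.edges} = {z | z ∈ p.edges ∧ ∀ e ∈ z, u ∈ (e : Sym2 V)}) ∧
    {z | z ∈ p.edges ∧ ∃ e f : G.edgeSet, z = s(e, f) ∧
      u ∈ (e : Sym2 V) ∧ u ∉ (f : Sym2 V)}.ncard = 2 := by
  classical
  have hne : ∀ i j : Fin 4, i ≠ j → e_ i ≠ e_ j := fun i j h hh => h (hinj hh)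
  have hadjS : ∀ i j : Fin 4, i ≠ j → (G.lineGraph).Adj (e_ i) (e_ j) := by
    intro i j hij
    rw [lineGraph_adj_iff_exists]
    exact ⟨hne i j hij, u, hS i, hS j⟩
  have hself : ∀ x : G.edgeSet, s(x, x) ∉ p.edges := by
    intro x hx
    exact (G.lineGraph).irrefl (p.adj_of_mem_edges hx)
  -- connectivity: each hamiltonian cycle uses an edge leaving the clique
  have conn : ∀ {w : G.edgeSet} (r : (G.lineGraph).Walk w w),
      r.IsHamiltonianCycle → ∃ i, s(e_ i, f_ i) ∈ r.edges := by
    intro w r hr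
    by_contra hno
    push_neg at hno
    have h0 : e_ 0 ∈ r.support := hr.mem_support _
    have hstep : ∀ x y : G.edgeSet, s(x, y) ∈ (r.rotate _ h0).edges →
        u ∈ (x : Sym2 V) → u ∈ (y : Sym2 V) := by
      intro x y hz hux
      have hz' : s(x, y) ∈ r.edges := (r.rotate_edges _ h0).perm.mem_iff.mp hz
      obtain ⟨i, rfl⟩ := hsurj x hux
      rcases hnbr i y (r.adj_of_mem_edges hz') with h | rfl
      · exact h
      · exact absurd hz' (hno i)
    have hall := support_closed (r.rotate _ h0) (hS 0) hstep
    have hftail : f_ 0 ∈ r.support.tail :=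
      Walk.support_tail_of_not_nil r hr.1.not_nil ▸ hr.isHamiltonian_tail.mem_support _
    have hmem : f_ 0 ∈ (r.rotate _ h0).support.tail :=
      ((r.support_rotate _ h0).perm.mem_iff).mpr hftail
    exact hfu 0 (hall _ (List.mem_of_mem_tail hmem))
  -- local structure at each clique vertex
  have hstruct : ∀ i : Fin 4, ∃ c d : G.edgeSet, c ≠ d ∧
      (∀ y : G.edgeSet, s(e_ i, y) ∈ p.edges ↔ y = c ∨ y = d) := by
    intro i
    obtain ⟨c, d, hcd, hc, hd, huniq⟩ := cycle_edges_at p hp.isCycle (e_ i) (hp.mem_support _)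
    refine ⟨c, d, hcd, fun y => ⟨fun h => ?_, fun h => ?_⟩⟩
    · rcases huniq _ h (Sym2.mem_mk_left _ _) with h' | h'
      · left; exact Sym2.congr_right.mp h'
      · right; exact Sym2.congr_right.mp h'
    · rcases h with rfl | rfl
      exacts [hc, hd]
  have hdeg : ∀ i j k l : Fin 4, i ≠ j → i ≠ k → i ≠ l → j ≠ k → j ≠ l → k ≠ l →
      (decide (s(e_ i, e_ j) ∈ p.edges)).toNat + (decide (s(e_ i, e_ k) ∈ p.edges)).toNat +
      (decide (s(e_ i, e_ l) ∈ p.edges)).toNat + (decide (s(e_ i, f_ i) ∈ p.edges)).toNat = 2 := by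
    intro i j k l hij hik hil hjk hjl hkl
    obtain ⟨c, d, hcd, hiff⟩ := hstruct i
    have hcand : ∀ x : G.edgeSet, s(e_ i, x) ∈ p.edges →
        (x = e_ j ∨ x = e_ k ∨ x = e_ l ∨ x = f_ i) := by
      intro x hx
      rcases hnbr i x (p.adj_of_mem_edges hx) with h | rfl
      · obtain ⟨m, rfl⟩ := hsurj x h
        have hmi : m ≠ i := by
          rintro rfl
          exact hself _ hx
        rcases fin4_cover j k l i m hjk hjl hij.symm hkl hik.symm hil.symm with
          rfl | rfl | rfl | rfl
        · tauto
        · tauto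
        · tauto
        · exact absurd rfl hmi
      · tauto
    have hc : c = e_ j ∨ c = e_ k ∨ c = e_ l ∨ c = f_ i := hcand c ((hiff c).mpr (Or.inl rfl))
    have hd : d = e_ j ∨ d = e_ k ∨ d = e_ l ∨ d = f_ i := hcand d ((hiff d).mpr (Or.inr rfl))
    have hfej : ∀ j : Fin 4, e_ j ≠ f_ i := fun j hh => hfu i (hh ▸ hS j)
    exact count4 (hne j k hjk) (hne j l hjl) (hfej j) (hne k l hkl) (hfej k) (hfej l)
      hcd hc hd (hiff (e_ j)) (hiff (e_ k)) (hiff (e_ l)) (hiff (f_ i))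
  -- swap lemma
  have hsw : ∀ i j : Fin 4,
      decide (s(e_ i, e_ j) ∈ p.edges) = decide (s(e_ j, e_ i) ∈ p.edges) := by
    intro i j
    rw [decide_eq_decide, Sym2.eq_swap]
  have hex : ∃ i, s(e_ i, f_ i) ∈ p.edges := conn p hp
  have hnex : ∃ i, s(e_ i, f_ i) ∉ p.edges := by
    obtain ⟨i, hi⟩ := conn q hq
    exact ⟨i, fun hh => (Set.disjoint_left.mp hdisj hh) hi⟩
  have main := pathBool (decide (s(e_ 0, e_ 1) ∈ p.edges)) (decide (s(e_ 0, e_ 2) ∈ p.edges))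
    (decide (s(e_ 0, e_ 3) ∈ p.edges)) (decide (s(e_ 1, e_ 2) ∈ p.edges))
    (decide (s(e_ 1, e_ 3) ∈ p.edges)) (decide (s(e_ 2, e_ 3) ∈ p.edges))
    (decide (s(e_ 0, f_ 0) ∈ p.edges)) (decide (s(e_ 1, f_ 1) ∈ p.edges))
    (decide (s(e_ 2, f_ 2) ∈ p.edges)) (decide (s(e_ 3, f_ 3) ∈ p.edges))
    (hdeg 0 1 2 3 (by decide) (by decide) (by decide) (by decide) (by decide) (by decide))
    (by rw [hsw 0 1]
        exact hdeg 1 0 2 3 (by decide) (by decide) (by decide) (by decide) (by decide) (by decide))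
    (by rw [hsw 0 2, hsw 1 2]
        exact hdeg 2 0 1 3 (by decide) (by decide) (by decide) (by decide) (by decide) (by decide))
    (by rw [hsw 0 3, hsw 1 3, hsw 2 3]
        exact hdeg 3 0 1 2 (by decide) (by decide) (by decide) (by decide) (by decide) (by decide))
    (by obtain ⟨i, hi⟩ := hex
        revert hi; fin_cases i <;> intro hi <;> simp [hi] <;> tauto)
    (by obtain ⟨i, hi⟩ := hnex
        revert hi; fin_cases i <;> intro hi <;> simp [hi] <;> tauto)
  obtain ⟨a', b', c', d', hab, hac, had, hbc, hbd, hcd, hcover, hTiff, hOiff⟩ := main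
  have hM : ∀ i j : Fin 4,
      (!![false, decide (s(e_ 0, e_ 1) ∈ p.edges), decide (s(e_ 0, e_ 2) ∈ p.edges),
          decide (s(e_ 0, e_ 3) ∈ p.edges);
          decide (s(e_ 0, e_ 1) ∈ p.edges), false, decide (s(e_ 1, e_ 2) ∈ p.edges),
          decide (s(e_ 1, e_ 3) ∈ p.edges);
          decide (s(e_ 0, e_ 2) ∈ p.edges), decide (s(e_ 1, e_ 2) ∈ p.edges), false,
          decide (s(e_ 2, e_ 3) ∈ p.edges);
          decide (s(e_ 0, e_ 3) ∈ p.edges), decide (s(e_ 1, e_ 3) ∈ p.edges),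
          decide (s(e_ 2, e_ 3) ∈ p.edges), false] i j)
        = decide (s(e_ i, e_ j) ∈ p.edges) := by
    intro i j
    fin_cases i <;> fin_cases j <;>
      simp only [Matrix.cons_val', Matrix.cons_val_zero, Matrix.cons_val_one, Matrix.head_cons,
        Matrix.empty_val', Matrix.cons_val_fin_one, Matrix.head_fin_const, Matrix.cons_val_succ,
        Matrix.of_apply, Fin.mk_zero, Fin.mk_one] <;>
      first
        | (symm; exact decide_eq_false (hself _))
        | rfl
        | (apply hsw)
  have hO : ∀ i : Fin 4,
      (![decide (s(e_ 0, f_ 0) ∈ p.edges), decide (s(e_ 1, f_ 1) ∈ p.edges),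
         decide (s(e_ 2, f_ 2) ∈ p.edges), decide (s(e_ 3, f_ 3) ∈ p.edges)] i)
        = decide (s(e_ i, f_ i) ∈ p.edges) := by
    intro i
    fin_cases i <;> rfl
  have hmemP : ∀ i j : Fin 4, s(e_ i, e_ j) ∈ p.edges ↔
      (s(i, j) = s(a', b') ∨ s(i, j) = s(b', c') ∨ s(i, j) = s(c', d')) := by
    intro i j
    rw [← hTiff i j, hM i j, decide_eq_true_eq]
  have hmemO : ∀ i : Fin 4, s(e_ i, f_ i) ∈ p.edges ↔ (i = a' ∨ i = d') := by
    intro i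
    rw [← hOiff i, hO i, decide_eq_true_eq]
  constructor
  · -- the hamiltonian path of the clique
    refine ⟨e_ a', e_ d', Walk.cons (hadjS a' b' hab) (Walk.cons (hadjS b' c' hbc)
      (Walk.cons (hadjS c' d' hcd) Walk.nil)), hne a' d' had, hS a', hS d', ?_, ?_, ?_⟩
    · rw [Walk.isPath_def]
      simp [hne a' b' hab, hne a' c' hac, hne a' d' had, hne b' c' hbc, hne b' d' hbd,
        hne c' d' hcd]
    · ext z
      simp only [Set.mem_setOf_eq, Walk.support_cons, Walk.support_nil, List.mem_cons,
        List.mem_singleton, List.not_mem_nil, or_false]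
      constructor
      · rintro (rfl | rfl | rfl | rfl) <;> exact hS _
      · intro hz
        obtain ⟨i, rfl⟩ := hsurj z hz
        rcases hcover i with rfl | rfl | rfl | rfl <;> tauto
    · ext z
      simp only [Set.mem_setOf_eq, Walk.edges_cons, Walk.edges_nil, List.mem_cons,
        List.not_mem_nil, or_false]
      constructor
      · rintro (rfl | rfl | rfl)
        · refine ⟨(hmemP a' b').mpr (Or.inl rfl), ?_⟩
          intro w hw
          rcases Sym2.mem_iff.mp hw with rfl | rfl <;> exact hS _
        · refine ⟨(hmemP b' c').mpr (Or.inr (Or.inl rfl)), ?_⟩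
          intro w hw
          rcases Sym2.mem_iff.mp hw with rfl | rfl <;> exact hS _
        · refine ⟨(hmemP c' d').mpr (Or.inr (Or.inr rfl)), ?_⟩
          intro w hw
          rcases Sym2.mem_iff.mp hw with rfl | rfl <;> exact hS _
      · rintro ⟨hzp, hzu⟩
        revert hzp hzu
        induction z using Sym2.ind with
        | _ x1 y1 =>
          intro hzp hzu
          obtain ⟨i, rfl⟩ := hsurj x1 (hzu _ (Sym2.mem_mk_left _ _))
          obtain ⟨j, rfl⟩ := hsurj y1 (hzu _ (Sym2.mem_mk_right _ _))
          rcases (hmemP i j).mp hzp with h | h | h <;>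
            rcases Sym2.eq_iff.mp h with ⟨rfl, rfl⟩ | ⟨rfl, rfl⟩ <;>
            first
              | exact Or.inl rfl
              | exact Or.inl Sym2.eq_swap
              | exact Or.inr (Or.inl rfl)
              | exact Or.inr (Or.inl Sym2.eq_swap)
              | exact Or.inr (Or.inr rfl)
              | exact Or.inr (Or.inr Sym2.eq_swap)
  · -- the two edges leaving the clique
    have houtset : {z | z ∈ p.edges ∧ ∃ e f : G.edgeSet, z = s(e, f) ∧
        u ∈ (e : Sym2 V) ∧ u ∉ (f : Sym2 V)}
        = {s(e_ a', f_ a'), s(e_ d', f_ d')} := by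
      ext z
      simp only [Set.mem_setOf_eq, Set.mem_insert_iff, Set.mem_singleton_iff]
      constructor
      · rintro ⟨hzp, e, f, rfl, hue, huf⟩
        obtain ⟨i, rfl⟩ := hsurj e hue
        have hf : f = f_ i := by
          rcases hnbr i f (p.adj_of_mem_edges hzp) with h | h
          · exact absurd h huf
          · exact h
        subst hf
        rcases (hmemO i).mp hzp with rfl | rfl
        · left; rfl
        · right; rfl
      · rintro (rfl | rfl)
        · exact ⟨(hmemO a').mpr (Or.inl rfl), _, _, rfl, hS a', hfu a'⟩
        · exact ⟨(hmemO d').mpr (Or.inr rfl), _, _, rfl, hS d', hfu d'⟩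
    rw [houtset]
    apply Set.ncard_pair
    intro h
    rcases Sym2.eq_iff.mp h with ⟨h1, _⟩ | ⟨h1, _⟩
    · exact hne a' d' had h1
    · exact hfu d' (h1 ▸ hS a')

theorem clique_hamiltonian_paths {V : Type*} [Fintype V] [DecidableEq V]
    (G : SimpleGraph V) [DecidableRel G.Adj]
    (hbireg : G.IsBiregular42)
    {a b : G.edgeSet}
    (p : (G.lineGraph).Walk a a) (q : (G.lineGraph).Walk b b)
    (hp : p.IsHamiltonianCycle) (hq : q.IsHamiltonianCycle)
    (hdisj : Disjoint {x | x ∈ p.edges} {x | x ∈ q.edges})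
    (hunion : {x | x ∈ p.edges} ∪ {x | x ∈ q.edges} = (G.lineGraph).edgeSet)
    (u : V) (hu : G.degree u = 4) :
    (∃ (x y : G.edgeSet) (P : (G.lineGraph).Walk x y), x ≠ y ∧
      u ∈ (x : Sym2 V) ∧ u ∈ (y : Sym2 V) ∧ P.IsPath ∧
      {z | z ∈ P.support} = {e : G.edgeSet | u ∈ (e : Sym2 V)} ∧
      {z | z ∈ P.edges} = {z | z ∈ p.edges ∧ ∀ e ∈ z, u ∈ (e : Sym2 V)}) ∧
    (∃ (x y : G.edgeSet) (Q : (G.lineGraph).Walk x y), x ≠ y ∧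
      u ∈ (x : Sym2 V) ∧ u ∈ (y : Sym2 V) ∧ Q.IsPath ∧
      {z | z ∈ Q.support} = {e : G.edgeSet | u ∈ (e : Sym2 V)} ∧
      {z | z ∈ Q.edges} = {z | z ∈ q.edges ∧ ∀ e ∈ z, u ∈ (e : Sym2 V)}) ∧
    {z | z ∈ p.edges ∧ ∃ e f : G.edgeSet, z = s(e, f) ∧
      u ∈ (e : Sym2 V) ∧ u ∉ (f : Sym2 V)}.ncard = 2 ∧
    {z | z ∈ q.edges ∧ ∃ e f : G.edgeSet, z = s(e, f) ∧
      u ∈ (e : Sym2 V) ∧ u ∉ (f : Sym2 V)}.ncard = 2 := by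
  classical
  -- the four edges at `u`
  have hcard : (Finset.univ.filter (fun e : G.edgeSet => u ∈ (e : Sym2 V))).card = 4 := by
    rw [← hu, ← card_incidenceFinset_eq_degree]
    apply Finset.card_bij (fun (e : G.edgeSet) _ => (e : Sym2 V))
    · intro e he
      rw [mem_incidenceFinset]
      exact ⟨e.2, (Finset.mem_filter.mp he).2⟩
    · intro e1 _ e2 _ h
      exact Subtype.ext h
    · intro z hz
      rw [mem_incidenceFinset] at hz
      exact ⟨⟨z, hz.1⟩, Finset.mem_filter.mpr ⟨Finset.mem_univ _, hz.2⟩, rfl⟩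
  let eqv := (Finset.univ.filter (fun e : G.edgeSet => u ∈ (e : Sym2 V))).equivFinOfCardEq hcard
  let e_ : Fin 4 → G.edgeSet := fun i => ((eqv.symm i : _) : G.edgeSet)
  have hinj : Function.Injective e_ := fun i j h =>
    eqv.symm.injective (Subtype.coe_injective h)
  have hS : ∀ i, u ∈ (e_ i : Sym2 V) := by
    intro i
    exact (Finset.mem_filter.mp (eqv.symm i).2).2
  have hsurj : ∀ x : G.edgeSet, u ∈ (x : Sym2 V) → ∃ i, e_ i = x := by
    intro x hx
    have hx' : x ∈ Finset.univ.filter (fun e : G.edgeSet => u ∈ (e : Sym2 V)) :=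
      Finset.mem_filter.mpr ⟨Finset.mem_univ _, hx⟩
    exact ⟨eqv ⟨x, hx'⟩, congrArg Subtype.val (Equiv.symm_apply_apply eqv ⟨x, hx'⟩)⟩
  -- the other edge at the other endpoint
  have hfex : ∀ i, ∃ f : G.edgeSet, u ∉ (f : Sym2 V) ∧
      (∀ x : G.edgeSet, (G.lineGraph).Adj (e_ i) x → u ∈ (x : Sym2 V) ∨ x = f) := by
    intro i
    have hui : u ∈ (e_ i : Sym2 V) := hS i
    have hspec : s(u, Sym2.Mem.other hui) = (e_ i : Sym2 V) := Sym2.other_spec hui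
    set v := Sym2.Mem.other hui with hvdef
    have hadjuv : G.Adj u v := by
      rw [← SimpleGraph.mem_edgeSet, hspec]
      exact (e_ i).2
    have hdegv : G.degree v = 2 := by
      rcases hbireg.2 hadjuv with ⟨_, h⟩ | ⟨h, _⟩
      · exact h
      · omega
    have hvi : v ∈ (e_ i : Sym2 V) := by
      rw [← hspec]
      exact Sym2.mem_mk_right _ _
    have hIcard : (G.incidenceFinset v).card = 2 := by
      rw [card_incidenceFinset_eq_degree, hdegv]
    have hei : (e_ i : Sym2 V) ∈ G.incidenceFinset v := by
      rw [mem_incidenceFinset]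
      exact ⟨(e_ i).2, hvi⟩
    obtain ⟨f', hf'I, hf'ne⟩ :=
      Finset.exists_mem_ne (s := G.incidenceFinset v) (by omega) ((e_ i : Sym2 V))
    rw [mem_incidenceFinset] at hf'I
    obtain ⟨hf'E, hvf'⟩ := hf'I
    have huf' : u ∉ f' := by
      intro hu'
      exact hf'ne (Sym2.eq_of_ne_mem hadjuv.ne hu' hvf' hui hvi)
    have hIeq : G.incidenceFinset v = {(e_ i : Sym2 V), f'} := by
      symm
      apply Finset.eq_of_subset_of_card_le
      · intro z hz
        rcases Finset.mem_insert.mp hz with rfl | hz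
        · exact hei
        · rw [Finset.mem_singleton.mp hz, mem_incidenceFinset]
          exact ⟨hf'E, hvf'⟩
      · rw [hIcard, Finset.card_insert_of_notMem (by simpa using hf'ne.symm),
          Finset.card_singleton]
    refine ⟨⟨f', hf'E⟩, huf', ?_⟩
    intro x hadj
    rw [lineGraph_adj_iff_exists] at hadj
    obtain ⟨hnex, w, hw1, hw2⟩ := hadj
    rw [← hspec, Sym2.mem_iff] at hw1
    rcases hw1 with rfl | rfl
    · left; exact hw2
    · right
      have hxI : (x : Sym2 V) ∈ G.incidenceFinset v := by
        rw [mem_incidenceFinset]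
        exact ⟨x.2, hw2⟩
      rw [hIeq] at hxI
      rcases Finset.mem_insert.mp hxI with h | h
      · exact absurd (Subtype.ext h).symm hnex
      · exact Subtype.ext (Finset.mem_singleton.mp h)
  choose f_ hfu hnbr using hfex
  obtain ⟨hP, hpcard⟩ := halfK G e_ f_ hinj hS hsurj hfu hnbr p q hp hq hdisj
  obtain ⟨hQ, hqcard⟩ := halfK G e_ f_ hinj hS hsurj hfu hnbr q p hq hp hdisj.symm
  exact ⟨hP, hQ, hpcard, hqcard⟩
end
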